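/- arXiv:1212.4178 — 8 statements merged into one kernel-verified Lean document; each statement's English description precedes it below -/
import Mathlib

section
/- Let m ≥ 1 be a natural number and let ϖ_m = 2∫_0^1 (1-t^m)^(-1/2) dt. Then the infinite product ∏_{n=1}^∞ (2n(2mn+m+2))/((2n+1)(2mn+2)) converges, and ϖ_m = (2(m+2)/m) · ∏_{n=1}^∞ (2n(2mn+m+2))/((2n+1)(2mn+2)). -/
open Filter Topology MeasureTheory Set


lemma real_beta {a b : ℝ} (ha : 0 < a) (hb : 0 < b) :
    ∫ x in (0:ℝ)..1, x ^ (a-1) * (1-x) ^ (b-1)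
      = Real.Gamma a * Real.Gamma b / Real.Gamma (a+b) := by
  have hab : 0 < a + b := by linarith
  have h := Complex.Gamma_mul_Gamma_eq_betaIntegral
    (s := (a:ℂ)) (t := (b:ℂ)) (by simpa using ha) (by simpa using hb)
  have hB : Complex.betaIntegral a b
      = ((∫ x in (0:ℝ)..1, x ^ (a-1) * (1-x) ^ (b-1) : ℝ) : ℂ) := by
    rw [Complex.betaIntegral, ← intervalIntegral.integral_ofReal]
    refine intervalIntegral.integral_congr fun x hx => ?_
    rw [uIcc_of_le zero_le_one] at hx
    rw [show ((a:ℂ)-1) = ((a-1:ℝ):ℂ) by push_cast; ring,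
      show ((b:ℂ)-1) = ((b-1:ℝ):ℂ) by push_cast; ring,
      show ((1:ℂ)-(x:ℝ)) = ((1-x:ℝ):ℂ) by push_cast; ring,
      ← Complex.ofReal_cpow hx.1, ← Complex.ofReal_cpow (by linarith [hx.2]),
      ← Complex.ofReal_mul]
  rw [hB, ← Complex.ofReal_add, Complex.Gamma_ofReal, Complex.Gamma_ofReal,
    Complex.Gamma_ofReal, ← Complex.ofReal_mul, ← Complex.ofReal_mul] at h
  have h' := Complex.ofReal_injective h
  have hΓ : Real.Gamma (a+b) ≠ 0 := (Real.Gamma_pos_of_pos hab).ne'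
  field_simp
  linarith [h']

lemma clover_subst (m : ℕ) (hm : 1 ≤ m) :
    ∫ x in (0:ℝ)..1, x ^ ((1/m:ℝ)-1) * (1-x) ^ (-(1/2):ℝ)
      = m * ∫ t in (0:ℝ)..1, (1 - t ^ m) ^ (-(1/2) : ℝ) := by
  have hm0 : (0:ℝ) < m := by exact_mod_cast hm
  have himg : (fun t : ℝ => t ^ m) '' Ioo 0 1 = Ioo 0 1 := by
    ext u
    constructor
    · rintro ⟨t, ht, rfl⟩
      exact ⟨pow_pos ht.1 m, pow_lt_one₀ ht.1.le ht.2 (by omega)⟩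
    · intro hu
      refine ⟨u ^ ((m:ℝ)⁻¹), ⟨Real.rpow_pos_of_pos hu.1 _,
        Real.rpow_lt_one hu.1.le hu.2 (by positivity)⟩, ?_⟩
      show (u ^ ((m:ℝ)⁻¹)) ^ m = u
      rw [← Real.rpow_natCast (u ^ ((m:ℝ)⁻¹)) m, ← Real.rpow_mul hu.1.le,
        inv_mul_cancel₀ hm0.ne', Real.rpow_one]
  have hderiv : ∀ t ∈ Ioo (0:ℝ) 1,
      HasDerivWithinAt (fun t : ℝ => t ^ m) ((m:ℝ) * t ^ (m-1)) (Ioo 0 1) t :=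
    fun t _ => (hasDerivAt_pow m t).hasDerivWithinAt
  have hinj : InjOn (fun t : ℝ => t ^ m) (Ioo 0 1) :=
    (pow_left_strictMonoOn₀ (by omega)).injOn.mono (fun t ht => ht.1.le)
  have key := integral_image_eq_integral_abs_deriv_smul measurableSet_Ioo hderiv hinj
    (fun u : ℝ => u ^ ((1/m:ℝ)-1) * (1-u) ^ (-(1/2):ℝ))
  rw [himg] at key
  rw [intervalIntegral.integral_of_le zero_le_one, integral_Ioc_eq_integral_Ioo, key,
    intervalIntegral.integral_of_le zero_le_one, integral_Ioc_eq_integral_Ioo,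
    ← MeasureTheory.integral_const_mul]
  refine setIntegral_congr_fun measurableSet_Ioo fun t ht => ?_
  have ht0 : (0:ℝ) < t := ht.1
  have h1 : ((t ^ m : ℝ)) ^ ((1/m:ℝ)-1) = t ^ ((m:ℝ) * ((1/m:ℝ)-1)) := by
    rw [← Real.rpow_natCast t m, ← Real.rpow_mul ht0.le]
  have h2 : |(m:ℝ) * t ^ (m-1)| = (m:ℝ) * t ^ (m-1) := by
    rw [abs_of_nonneg]; positivity
  simp only [smul_eq_mul, h2, h1]
  have h3 : (t : ℝ) ^ (m-1) = t ^ (((m-1:ℕ)):ℝ) := by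
    rw [Real.rpow_natCast]
  have h4 : (((m-1:ℕ)):ℝ) + (m:ℝ) * ((1/m:ℝ)-1) = 0 := by
    have : (((m-1:ℕ)):ℝ) = (m:ℝ) - 1 := by
      push_cast [Nat.cast_sub hm]; ring
    rw [this]; field_simp; ring
  have h5 : t ^ (((m-1:ℕ)):ℝ) * t ^ ((m:ℝ) * ((1/m:ℝ)-1)) = 1 := by
    rw [← Real.rpow_add ht0, h4, Real.rpow_zero]
  rw [h3, mul_assoc ((m:ℝ)), ← mul_assoc (t ^ (((m-1:ℕ)):ℝ)), h5, one_mul]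

lemma clover_prod_key (m : ℕ) (hm : 1 ≤ m) (N : ℕ) :
    ((m:ℝ)+2) * (∏ n ∈ Finset.Icc 1 N,
        ((2 * n * (2 * m * n + m + 2) : ℝ) / ((2 * n + 1) * (2 * m * n + 2)))) *
      (∏ j ∈ Finset.range (N+1), (1/(m:ℝ) + j)) *
      (∏ j ∈ Finset.range (N+1), ((1/2:ℝ) + j))
    = (Nat.factorial N : ℝ) * ∏ j ∈ Finset.range (N+1), (1/(m:ℝ) + 1/2 + j) := by
  have hm0 : (0:ℝ) < m := by exact_mod_cast hm
  induction N with
  | zero =>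
      simp only [Finset.Icc_self, Finset.Icc_eq_empty_of_lt (by norm_num : (1:ℕ) > 0),
        Finset.prod_empty, zero_add, Finset.prod_range_one, Nat.factorial_zero]
      push_cast
      field_simp
      ring
  | succ N ih =>
      rw [Finset.prod_Icc_succ_top (by omega : 1 ≤ N + 1),
        Finset.prod_range_succ (fun j => (1/(m:ℝ) + j)) (N+1),
        Finset.prod_range_succ (fun j => ((1/2:ℝ) + j)) (N+1),
        Finset.prod_range_succ (fun j => (1/(m:ℝ) + 1/2 + j)) (N+1),
        Nat.factorial_succ]
      have hden1 : ((2:ℝ) * (N+1) + 1) ≠ 0 := by positivity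
      have hden2 : ((2:ℝ) * m * (N+1) + 2) ≠ 0 := by positivity
      have ht : ((2 * (N+1) * (2 * m * (N+1) + m + 2) : ℝ) /
            ((2 * (N+1) + 1) * (2 * m * (N+1) + 2))) *
          (1/(m:ℝ) + (N+1)) * ((1/2:ℝ) + (N+1))
          = ((N:ℝ)+1) * (1/(m:ℝ) + 1/2 + (N+1)) := by
        field_simp
        ring
      push_cast
      push_cast at ih ht
      linear_combination (2 * ((N:ℝ)+1) * (2 * m * ((N:ℝ)+1) + m + 2) /
          ((2 * ((N:ℝ)+1) + 1) * (2 * m * ((N:ℝ)+1) + 2)) *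
          (1/(m:ℝ) + ((N:ℝ)+1)) * ((1/2:ℝ) + ((N:ℝ)+1))) * ih +
        ((Nat.factorial N : ℝ) * ∏ j ∈ Finset.range (N+1), (1/(m:ℝ) + 1/2 + j)) * ht

lemma clover_prod_gammaSeq (m : ℕ) (hm : 1 ≤ m) (N : ℕ) (hN : 1 ≤ N) :
    (2 * (m + 2) / m : ℝ) *
        ∏ n ∈ Finset.Icc 1 N,
          ((2 * n * (2 * m * n + m + 2) : ℝ) / ((2 * n + 1) * (2 * m * n + 2)))
    = 2 / m * Real.GammaSeq (1/(m:ℝ)) N * Real.GammaSeq (1/2) N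
        / Real.GammaSeq (1/(m:ℝ) + 1/2) N := by
  have hm0 : (0:ℝ) < m := by exact_mod_cast hm
  have hN0 : (0:ℝ) < N := by exact_mod_cast hN
  have hQa : (0:ℝ) < ∏ j ∈ Finset.range (N+1), (1/(m:ℝ) + j) :=
    Finset.prod_pos fun j _ => by positivity
  have hQb : (0:ℝ) < ∏ j ∈ Finset.range (N+1), ((1/2:ℝ) + j) :=
    Finset.prod_pos fun j _ => by positivity
  have hQab : (0:ℝ) < ∏ j ∈ Finset.range (N+1), (1/(m:ℝ) + 1/2 + j) :=
    Finset.prod_pos fun j _ => by positivity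
  have hfac : (0:ℝ) < Nat.factorial N := by exact_mod_cast N.factorial_pos
  have hpa : (0:ℝ) < (N:ℝ) ^ (1/(m:ℝ)) := Real.rpow_pos_of_pos hN0 _
  have hpb : (0:ℝ) < (N:ℝ) ^ ((1/2:ℝ)) := Real.rpow_pos_of_pos hN0 _
  have hpab : (0:ℝ) < (N:ℝ) ^ (1/(m:ℝ) + 1/2) := Real.rpow_pos_of_pos hN0 _
  have hNpow : (N:ℝ) ^ (1/(m:ℝ)) * (N:ℝ) ^ ((1/2:ℝ))
      = (N:ℝ) ^ (1/(m:ℝ) + 1/2) := (Real.rpow_add hN0 _ _).symm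
  have key := clover_prod_key m hm N
  rw [Real.GammaSeq, Real.GammaSeq, Real.GammaSeq, ← hNpow]
  set P := ∏ n ∈ Finset.Icc 1 N,
      ((2 * n * (2 * m * n + m + 2) : ℝ) / ((2 * n + 1) * (2 * m * n + 2))) with hPdef
  set Qa := ∏ j ∈ Finset.range (N+1), (1/(m:ℝ) + j) with hQadef
  set Qb := ∏ j ∈ Finset.range (N+1), ((1/2:ℝ) + j) with hQbdef
  set Qab := ∏ j ∈ Finset.range (N+1), (1/(m:ℝ) + 1/2 + j) with hQabdef
  field_simp
  linear_combination key


/-- **A Wallis product on clovers.**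
For a natural number `m ≥ 1`, let `ϖ = 2 ∫_0^1 (1 - t^m)^(-1/2) dt` (the arc length of the
principal leaf of the `m`-clover).  Then the partial products of
`∏_{n=1}^∞ (2n(2mn + m + 2)) / ((2n+1)(2mn+2))`, multiplied by `2(m+2)/m`, converge to `ϖ`. -/
theorem wallis_product_on_clovers (m : ℕ) (hm : 1 ≤ m)
    (ϖ : ℝ) (hϖ : ϖ = 2 * ∫ t in (0:ℝ)..1, (1 - t ^ m) ^ (-(1/2) : ℝ)) :
    Tendsto (fun N : ℕ =>
        (2 * (m + 2) / m : ℝ) *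
          ∏ n ∈ Finset.Icc 1 N,
            ((2 * n * (2 * m * n + m + 2) : ℝ) / ((2 * n + 1) * (2 * m * n + 2))))
      atTop (𝓝 ϖ) := by
  have hm0 : (0:ℝ) < m := by exact_mod_cast hm
  have hab : (0:ℝ) < 1/(m:ℝ) + 1/2 := by positivity
  have hΓab : Real.Gamma (1/(m:ℝ) + 1/2) ≠ 0 := (Real.Gamma_pos_of_pos hab).ne'
  -- value of ϖ
  have h2 := real_beta (a := 1/(m:ℝ)) (b := (1/2:ℝ)) (by positivity) (by norm_num)
  rw [show ((1/2:ℝ) - 1) = -(1/2:ℝ) by norm_num] at h2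
  have hG := (clover_subst m hm).symm.trans h2
  have hϖ' : ϖ = 2 / m * Real.Gamma (1/(m:ℝ)) * Real.Gamma (1/2)
      / Real.Gamma (1/(m:ℝ) + 1/2) := by
    rw [hϖ]
    field_simp at hG ⊢
    linarith [hG]
  rw [hϖ']
  have hlim : Tendsto (fun N : ℕ => 2 / (m:ℝ) * Real.GammaSeq (1/(m:ℝ)) N
        * Real.GammaSeq (1/2) N / Real.GammaSeq (1/(m:ℝ) + 1/2) N) atTop
      (𝓝 (2 / m * Real.Gamma (1/(m:ℝ)) * Real.Gamma (1/2)
        / Real.Gamma (1/(m:ℝ) + 1/2))) :=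
    ((tendsto_const_nhds.mul (Real.GammaSeq_tendsto_Gamma _)).mul
      (Real.GammaSeq_tendsto_Gamma _)).div (Real.GammaSeq_tendsto_Gamma _) hΓab
  refine hlim.congr' ?_
  filter_upwards [eventually_ge_atTop 1] with N hN
  exact (clover_prod_gammaSeq m hm N hN).symm
end

section
/- Let m ≥ 1 be a natural number, ϖ_m = 2∫_0^1 (1-t^m)^(-1/2) dt, and let φ : ℝ → ℝ satisfy: x = ∫_0^{φ(x)} (1-t^m)^(-1/2) dt and 0 ≤ φ(x) ≤ 1 for all x ∈ [0, ϖ_m/2], and φ(ϖ_m - x) = φ(x) for all x ∈ [0, ϖ_m]. Then for every x in the open interval (0, ϖ_m), φ is differentiable at x and φ(x)^m + (φ'(x))^2 = 1. -/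
open MeasureTheory intervalIntegral Set

namespace CloverAux

noncomputable def f (m : ℕ) (t : ℝ) : ℝ := (1 - t ^ m) ^ (-(1/2) : ℝ)

noncomputable def F (m : ℕ) (r : ℝ) : ℝ := ∫ t in (0:ℝ)..r, f m t

lemma f_meas (m : ℕ) : Measurable (f m) := by unfold f; fun_prop

lemma f_nonneg (m : ℕ) {t : ℝ} (ht : t ∈ Icc (0:ℝ) 1) : 0 ≤ f m t :=
  Real.rpow_nonneg (by nlinarith [pow_le_one₀ ht.1 ht.2 (n := m)]) _

lemma f_pos {m : ℕ} (hm : 1 ≤ m) {t : ℝ} (ht : t ∈ Ico (0:ℝ) 1) : 0 < f m t :=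
  Real.rpow_pos_of_pos (by nlinarith [pow_lt_one₀ ht.1 ht.2 (Nat.one_le_iff_ne_zero.mp hm)]) _

lemma f_intable {m : ℕ} (hm : 1 ≤ m) : IntervalIntegrable (f m) volume 0 1 := by
  have hg : IntervalIntegrable (fun x : ℝ => (1 - x) ^ (-(1/2) : ℝ)) volume 0 1 := by
    have := (intervalIntegrable_rpow' (a := 0) (b := 1) (r := -(1/2)) (by norm_num)).comp_sub_left 1
    simpa using this.symm
  refine hg.mono_fun (f_meas m).aestronglyMeasurable ?_
  rw [Set.uIoc_of_le (by norm_num : (0:ℝ) ≤ 1)]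
  filter_upwards [ae_restrict_mem measurableSet_Ioc] with t ht
  have h1 : t ^ m ≤ t := pow_le_of_le_one ht.1.le ht.2 (Nat.one_le_iff_ne_zero.mp hm)
  have h0 : (0:ℝ) ≤ 1 - t := by linarith [ht.2]
  rw [Real.norm_eq_abs, Real.norm_eq_abs, abs_of_nonneg (f_nonneg m ⟨ht.1.le, ht.2⟩),
    abs_of_nonneg (Real.rpow_nonneg h0 _)]
  rcases eq_or_lt_of_le h0 with h | h
  · unfold f
    rw [← h, Real.zero_rpow (by norm_num)]
    have : t = 1 := by linarith
    simp [this, Real.zero_rpow (show (-(1/2):ℝ) ≠ 0 by norm_num)]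
  · exact Real.rpow_le_rpow_of_nonpos h (by linarith) (by norm_num)

lemma f_intable' {m : ℕ} (hm : 1 ≤ m) {a b : ℝ} (ha : a ∈ Icc (0:ℝ) 1) (hb : b ∈ Icc (0:ℝ) 1) :
    IntervalIntegrable (f m) volume a b :=
  (f_intable hm).mono_set (uIcc_subset_uIcc (by simpa [uIcc_of_le] using ha)
    (by simpa [uIcc_of_le] using hb))

lemma F_add {m : ℕ} (hm : 1 ≤ m) {a b : ℝ} (ha : a ∈ Icc (0:ℝ) 1) (hb : b ∈ Icc (0:ℝ) 1) :
    F m a + ∫ t in a..b, f m t = F m b :=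
  integral_add_adjacent_intervals (f_intable' hm (by norm_num) ha) (f_intable' hm ha hb)

lemma F_mono {m : ℕ} (hm : 1 ≤ m) {a b : ℝ} (ha : 0 ≤ a) (hab : a ≤ b) (hb : b ≤ 1) :
    F m a ≤ F m b := by
  rw [← F_add hm ⟨ha, le_trans hab hb⟩ ⟨le_trans ha hab, hb⟩]
  have : 0 ≤ ∫ t in a..b, f m t :=
    intervalIntegral.integral_nonneg hab fun u hu => f_nonneg m ⟨le_trans ha hu.1, le_trans hu.2 hb⟩
  linarith

lemma F_strict {m : ℕ} (hm : 1 ≤ m) {a b : ℝ} (ha : 0 ≤ a) (hab : a < b) (hb : b ≤ 1) :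
    F m a < F m b := by
  rw [← F_add hm ⟨ha, le_trans hab.le hb⟩ ⟨le_trans ha hab.le, hb⟩]
  have : 0 < ∫ t in a..b, f m t := by
    refine intervalIntegral_pos_of_pos_on (f_intable' hm ⟨ha, le_trans hab.le hb⟩ ⟨le_trans ha hab.le, hb⟩)
      (fun x hx => f_pos hm ⟨le_trans ha hx.1.le, lt_of_lt_of_le hx.2 hb⟩) hab
  linarith

lemma F_zero (m : ℕ) : F m 0 = 0 := intervalIntegral.integral_same

lemma hasDerivAt_F {m : ℕ} (hm : 1 ≤ m) {r : ℝ} (hr : r ∈ Ico (0:ℝ) 1) :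
    HasDerivAt (F m) (f m r) r := by
  have hbase : (0:ℝ) < 1 - r ^ m := by
    nlinarith [pow_lt_one₀ hr.1 hr.2 (Nat.one_le_iff_ne_zero.mp hm)]
  have hcont : ContinuousAt (f m) r := by
    have : ContinuousAt (fun t : ℝ => 1 - t ^ m) r := by fun_prop
    exact this.rpow_const (Or.inl (ne_of_gt hbase))
  exact integral_hasDerivAt_right (f_intable' hm (by norm_num) ⟨hr.1, hr.2.le⟩)
    ((f_meas m).aestronglyMeasurable.stronglyMeasurableAtFilter) hcont

lemma one_sub_pow_le (m : ℕ) {t : ℝ} (ht : t ∈ Icc (0:ℝ) 1) : 1 - t ^ m ≤ m * (1 - t) := by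
  induction m with
  | zero => simp
  | succ n ih =>
    have h1 : t ^ n ≤ 1 := pow_le_one₀ ht.1 ht.2
    have h2 : t * (1 - t ^ n) ≤ 1 - t ^ n := by nlinarith [ht.1, ht.2]
    have : 1 - t ^ (n + 1) = (1 - t) + t * (1 - t ^ n) := by ring
    push_cast
    nlinarith [ht.2]

end CloverAux

open CloverAux

set_option maxHeartbeats 2000000 in
/-- **Clover Pythagorean identity.**
Let `m ≥ 1`, `ϖ = 2 ∫_0^1 (1 - t^m)^(-1/2) dt`, and let `φ` be the `m`-clover function:
on `[0, ϖ/2]` it is the inverse of the arc length integral `r ↦ ∫_0^r (1 - t^m)^(-1/2) dt`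
with values in `[0, 1]`, extended to `[0, ϖ]` by `φ(ϖ - x) = φ(x)`.  Then `φ` is
differentiable on `(0, ϖ)` and `φ(x)^m + φ'(x)^2 = 1` there. -/
theorem clover_pythagorean (m : ℕ) (hm : 1 ≤ m)
    (ϖ : ℝ) (hϖ : ϖ = 2 * ∫ t in (0:ℝ)..1, (1 - t ^ m) ^ (-(1/2) : ℝ))
    (φ : ℝ → ℝ)
    (hφ : ∀ x ∈ Set.Icc 0 (ϖ / 2),
      x = ∫ t in (0:ℝ)..(φ x), (1 - t ^ m) ^ (-(1/2) : ℝ))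
    (hφ01 : ∀ x ∈ Set.Icc 0 (ϖ / 2), φ x ∈ Set.Icc (0:ℝ) 1)
    (hφsymm : ∀ x ∈ Set.Icc 0 ϖ, φ (ϖ - x) = φ x) :
    ∀ x ∈ Set.Ioo 0 ϖ,
      DifferentiableAt ℝ φ x ∧ φ x ^ m + (deriv φ x) ^ 2 = 1 := by
  have hm0 : m ≠ 0 := Nat.one_le_iff_ne_zero.mp hm
  have hF1 : F m 1 = ϖ / 2 := by
    simp only [F, f]; rw [hϖ]; ring
  have hFφ : ∀ y ∈ Icc 0 (ϖ/2), F m (φ y) = y := by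
    intro y hy
    simp only [F, f]
    exact (hφ y hy).symm
  have hπ : 0 < ϖ := by
    have h := F_strict hm le_rfl one_pos le_rfl
    rw [F_zero, hF1] at h; linarith
  -- Zone A: derivative on (0, ϖ/2)
  have keyA : ∀ x ∈ Ioo 0 (ϖ/2), HasDerivAt φ ((1 - φ x ^ m) ^ ((1:ℝ)/2)) x := by
    intro x hx
    have hxIcc : x ∈ Icc 0 (ϖ/2) := ⟨hx.1.le, hx.2.le⟩
    obtain ⟨hr0, hr1⟩ := hφ01 x hxIcc
    have hrne0 : φ x ≠ 0 := by
      intro h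
      have h2 := hFφ x hxIcc
      rw [h, F_zero] at h2
      exact absurd h2.symm (ne_of_gt hx.1)
    have hrne1 : φ x ≠ 1 := by
      intro h
      have h2 := hFφ x hxIcc
      rw [h, hF1] at h2
      exact absurd h2.symm (ne_of_lt hx.2)
    have hr0' : 0 < φ x := lt_of_le_of_ne hr0 (Ne.symm hrne0)
    have hr1' : φ x < 1 := lt_of_le_of_ne hr1 hrne1
    -- continuity of φ at x
    have hcont : ContinuousAt φ x := by
      rw [Metric.continuousAt_iff]
      intro ε hε
      set ε' := min ε (min (φ x) (1 - φ x)) / 2 with hε'def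
      have hε'pos : 0 < ε' := by
        have : 0 < min ε (min (φ x) (1 - φ x)) := lt_min hε (lt_min hr0' (by linarith))
        simp only [hε'def]; linarith
      have hε'r : ε' ≤ (φ x) / 2 := by
        have : min ε (min (φ x) (1 - φ x)) ≤ φ x :=
          le_trans (min_le_right _ _) (min_le_left _ _)
        simp only [hε'def]; linarith
      have hε'r1 : ε' ≤ (1 - φ x) / 2 := by
        have : min ε (min (φ x) (1 - φ x)) ≤ 1 - φ x :=
          le_trans (min_le_right _ _) (min_le_right _ _)
        simp only [hε'def]; linarith
      have hε'ε : ε' ≤ ε / 2 := by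
        have := min_le_left ε (min (φ x) (1 - φ x))
        simp only [hε'def]; linarith
      have ha0 : 0 < φ x - ε' := by linarith
      have hb1 : φ x + ε' < 1 := by linarith
      have hx' : F m (φ x) = x := hFφ x hxIcc
      have hFa : F m (φ x - ε') < x := by
        have := F_strict hm ha0.le (by linarith : φ x - ε' < φ x) hr1; linarith
      have hFb : x < F m (φ x + ε') := by
        have := F_strict hm hr0 (by linarith : φ x < φ x + ε') hb1.le; linarith
      refine ⟨min (x - F m (φ x - ε')) (F m (φ x + ε') - x), lt_min (by linarith) (by linarith), fun {y} hy => ?_⟩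
      rw [Real.dist_eq] at hy
      have habs := abs_lt.mp hy
      have hy1 : F m (φ x - ε') < y := by
        have := min_le_left (x - F m (φ x - ε')) (F m (φ x + ε') - x); linarith
      have hy2 : y < F m (φ x + ε') := by
        have := min_le_right (x - F m (φ x - ε')) (F m (φ x + ε') - x); linarith
      have hy0 : 0 ≤ y := by
        have h0 : F m 0 ≤ F m (φ x - ε') := by
          rw [F_zero]
          have := F_mono hm le_rfl ha0.le (by linarith)
          rw [F_zero] at this; exact this
        rw [F_zero] at h0; linarith
      have hyP : y ≤ ϖ/2 := by
        have h0 : F m (φ x + ε') ≤ F m 1 := F_mono hm (by linarith) hb1.le le_rfl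
        rw [hF1] at h0; linarith
      have hyIcc : y ∈ Icc 0 (ϖ/2) := ⟨hy0, hyP⟩
      obtain ⟨hq0, hq1⟩ := hφ01 y hyIcc
      have h1 : φ x - ε' < φ y := by
        by_contra h
        push_neg at h
        have h2 : F m (φ y) ≤ F m (φ x - ε') := F_mono hm hq0 h (by linarith)
        rw [hFφ y hyIcc] at h2; linarith
      have h2 : φ y < φ x + ε' := by
        by_contra h
        push_neg at h
        have h2 : F m (φ x + ε') ≤ F m (φ y) := F_mono hm (by linarith) h hq1
        rw [hFφ y hyIcc] at h2; linarith
      rw [Real.dist_eq]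
      have : |φ y - φ x| < ε' := abs_lt.mpr ⟨by linarith, by linarith⟩
      linarith
    have hbase : (0:ℝ) < 1 - φ x ^ m := by
      nlinarith [pow_lt_one₀ hr0 hr1' hm0]
    have hF' := hasDerivAt_F hm (r := φ x) ⟨hr0, hr1'⟩
    have hfpos := f_pos hm (t := φ x) ⟨hr0, hr1'⟩
    have hfg : ∀ᶠ y in nhds x, F m (φ y) = y := by
      filter_upwards [isOpen_Ioo.mem_nhds hx] with y hy
      exact hFφ y ⟨hy.1.le, hy.2.le⟩
    have hD := HasDerivAt.of_local_left_inverse hcont hF' (ne_of_gt hfpos) hfg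
    have hinv : (f m (φ x))⁻¹ = (1 - φ x ^ m) ^ ((1:ℝ)/2) := by
      simp only [f]
      rw [Real.rpow_neg hbase.le, inv_inv]
    rwa [hinv] at hD
  -- φ(ϖ/2) = 1
  have hφhalf : φ (ϖ/2) = 1 := by
    have hmem : ϖ/2 ∈ Icc 0 (ϖ/2) := ⟨by linarith, le_rfl⟩
    obtain ⟨h0, h1⟩ := hφ01 _ hmem
    rcases lt_or_eq_of_le h1 with h | h
    · exfalso
      have := F_strict hm h0 h le_rfl
      rw [hFφ _ hmem, hF1] at this
      exact lt_irrefl _ this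
    · exact h
  -- key estimate near ϖ/2
  have keyB : ∀ c, 0 < c → ∃ η, 0 < η ∧ ∀ y ∈ Icc 0 (ϖ/2), ϖ/2 - y < η →
      1 - φ y ≤ c * (ϖ/2 - y) := by
    intro c hc
    set δ := min (c^2 / m) (1/2) with hδdef
    have hmpos : (0:ℝ) < m := by exact_mod_cast Nat.pos_of_ne_zero hm0
    have hδpos : 0 < δ := lt_min (by positivity) (by norm_num)
    have hδ1 : δ ≤ 1/2 := min_le_right _ _
    have hδc : δ ≤ c^2 / m := min_le_left _ _
    have hFδ : F m (1 - δ) < ϖ/2 := by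
      rw [← hF1]; exact F_strict hm (by linarith) (by linarith) le_rfl
    refine ⟨ϖ/2 - F m (1 - δ), by linarith, ?_⟩
    intro y hy hη
    obtain ⟨hq0, hq1⟩ := hφ01 y hy
    have h1 : 1 - δ < φ y := by
      by_contra h
      push_neg at h
      have h2 : F m (φ y) ≤ F m (1 - δ) := F_mono hm hq0 h (by linarith)
      rw [hFφ y hy] at h2; linarith
    have hsplit : ϖ/2 - y = ∫ t in (φ y)..1, f m t := by
      have h2 := F_add hm (a := φ y) (b := 1) ⟨hq0, hq1⟩ (by norm_num)
      rw [hFφ y hy, hF1] at h2; linarith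
    have hlow : ∀ t ∈ Ioo (φ y) 1, c⁻¹ ≤ f m t := by
      intro t ht
      have ht0 : 0 ≤ t := le_trans hq0 ht.1.le
      have htδ : 1 - δ < t := lt_trans h1 ht.1
      have hpow : 1 - t ^ m ≤ c ^ 2 := by
        have h3 := one_sub_pow_le m ⟨ht0, ht.2.le⟩
        have h4 : (m:ℝ) * (1 - t) ≤ (m:ℝ) * δ := by
          have : 1 - t ≤ δ := by linarith
          nlinarith
        have h5 : (m:ℝ) * δ ≤ c ^ 2 := by
          rw [le_div_iff₀ hmpos] at hδc
          linarith [mul_comm (m:ℝ) δ, hδc]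
        linarith
      have hpos : 0 < 1 - t ^ m := by
        nlinarith [pow_lt_one₀ ht0 ht.2 hm0]
      have h6 : (c^2 : ℝ) ^ (-(1/2):ℝ) ≤ f m t := by
        simp only [f]
        exact Real.rpow_le_rpow_of_nonpos hpos hpow (by norm_num)
      have hcsq : (c^2 : ℝ) ^ (-(1/2):ℝ) = c⁻¹ := by
        rw [← Real.rpow_natCast c 2, ← Real.rpow_mul hc.le]
        norm_num
        exact Real.rpow_neg_one c
      linarith [h6, hcsq ▸ h6]
    have hIoc : (∫ t in (φ y)..1, f m t) = ∫ t in Ioo (φ y) 1, f m t := by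
      rw [intervalIntegral.integral_of_le hq1, MeasureTheory.integral_Ioc_eq_integral_Ioo]
    have hint : IntegrableOn (f m) (Ioo (φ y) 1) volume := by
      have h7 := f_intable' hm (a := φ y) (b := 1) ⟨hq0, hq1⟩ (by norm_num)
      rw [intervalIntegrable_iff_integrableOn_Ioc_of_le hq1] at h7
      exact h7.mono_set Ioo_subset_Ioc_self
    have hconst : IntegrableOn (fun _ : ℝ => c⁻¹) (Ioo (φ y) 1) volume :=
      integrableOn_const measure_Ioo_lt_top.ne
    have hmono := MeasureTheory.setIntegral_mono_on hconst hint measurableSet_Ioo hlow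
    have hconstval : (∫ _ in Ioo (φ y) 1, c⁻¹) = (1 - φ y) * c⁻¹ := by
      rw [MeasureTheory.setIntegral_const, Real.volume_real_Ioo_of_le hq1, smul_eq_mul]
    rw [hconstval] at hmono
    rw [hsplit, hIoc]
    have h8 := mul_le_mul_of_nonneg_left hmono hc.le
    have h9 : c * ((1 - φ y) * c⁻¹) = 1 - φ y := by field_simp
    linarith
  -- derivative 0 at ϖ/2
  have hB : HasDerivAt φ 0 (ϖ/2) := by
    rw [hasDerivAt_iff_isLittleO, Asymptotics.isLittleO_iff]
    intro c hc
    obtain ⟨η, hη, hest⟩ := keyB c hc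
    have hminpos : 0 < min η (ϖ/2) := lt_min hη (by linarith)
    have hnb : Ioo (ϖ/2 - min η (ϖ/2)) (ϖ/2 + min η (ϖ/2)) ∈ nhds (ϖ/2) :=
      isOpen_Ioo.mem_nhds ⟨by linarith, by linarith⟩
    filter_upwards [hnb] with y hy
    have hmin1 : min η (ϖ/2) ≤ η := min_le_left _ _
    have hmin2 : min η (ϖ/2) ≤ ϖ/2 := min_le_right _ _
    simp only [smul_zero, sub_zero, hφhalf, Real.norm_eq_abs]
    rcases le_total y (ϖ/2) with h | h
    · have hy' : y ∈ Icc 0 (ϖ/2) := ⟨by linarith [hy.1], h⟩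
      have hb := hest y hy' (by linarith [hy.1])
      have := (hφ01 y hy').2
      rw [abs_of_nonpos (by linarith), abs_of_nonpos (by linarith)]
      linarith
    · have hyϖ : y ≤ ϖ := by linarith [hy.2]
      have hsym : φ y = φ (ϖ - y) := (hφsymm y ⟨by linarith, hyϖ⟩).symm
      have hz' : ϖ - y ∈ Icc 0 (ϖ/2) := ⟨by linarith, by linarith⟩
      have hb := hest (ϖ - y) hz' (by linarith [hy.2])
      have := (hφ01 _ hz').2
      rw [hsym, abs_of_nonpos (by linarith), abs_of_nonneg (by linarith)]
      linarith
  -- squaring helper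
  have hsq : ∀ r : ℝ, 0 ≤ r → r ≤ 1 → ((1 - r ^ m) ^ ((1:ℝ)/2)) ^ 2 = 1 - r ^ m := by
    intro r h0 h1
    have hs : (0:ℝ) ≤ 1 - r ^ m := by nlinarith [pow_le_one₀ h0 h1 (n := m)]
    rw [← Real.rpow_natCast ((1 - r ^ m) ^ ((1:ℝ)/2)) 2, ← Real.rpow_mul hs]
    norm_num
  intro x hx
  rcases lt_trichotomy x (ϖ/2) with h | h | h
  · have hD := keyA x ⟨hx.1, h⟩
    refine ⟨hD.differentiableAt, ?_⟩
    obtain ⟨h0, h1⟩ := hφ01 x ⟨hx.1.le, h.le⟩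
    rw [hD.deriv, hsq _ h0 h1]
    ring
  · subst h
    refine ⟨hB.differentiableAt, ?_⟩
    rw [hB.deriv, hφhalf]
    simp
  · have hz : ϖ - x ∈ Ioo 0 (ϖ/2) := ⟨by linarith [hx.2], by linarith⟩
    have hD := keyA (ϖ - x) hz
    have hneg : HasDerivAt (fun y : ℝ => ϖ - y) (-1) x := by
      simpa using (hasDerivAt_id x).const_sub ϖ
    have hcomp := hD.comp x hneg
    have heq : φ =ᶠ[nhds x] (fun y => φ (ϖ - y)) := by
      filter_upwards [isOpen_Ioo.mem_nhds (⟨h, hx.2⟩ : x ∈ Ioo (ϖ/2) ϖ)] with y hy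
      exact (hφsymm y ⟨by linarith [hy.1], hy.2.le⟩).symm
    have hD' : HasDerivAt φ ((1 - φ (ϖ - x) ^ m) ^ ((1:ℝ)/2) * (-1)) x :=
      HasDerivAt.congr_of_eventuallyEq hcomp heq
    refine ⟨hD'.differentiableAt, ?_⟩
    have hφeq : φ x = φ (ϖ - x) := (hφsymm x ⟨by linarith, hx.2.le⟩).symm
    obtain ⟨h0, h1⟩ := hφ01 (ϖ - x) ⟨hz.1.le, hz.2.le⟩
    rw [hD'.deriv, hφeq, mul_neg_one, neg_sq, hsq _ h0 h1]
    ring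
end

section
/- Let m ≥ 1 be a natural number, ϖ_m = 2∫_0^1 (1-t^m)^(-1/2) dt, and let φ : ℝ → ℝ satisfy: x = ∫_0^{φ(x)} (1-t^m)^(-1/2) dt and 0 ≤ φ(x) ≤ 1 for all x ∈ [0, ϖ_m/2], and φ(ϖ_m - x) = φ(x) for all x ∈ [0, ϖ_m]. Then for every x in the open interval (0, ϖ_m), φ is twice differentiable at x and φ(x)^(m-1) = -(2/m)·φ''(x). -/
open Set MeasureTheory intervalIntegral Filter

namespace CloverAux

lemma base_pos {m : ℕ} (hm : 1 ≤ m) {t : ℝ} (ht : t ∈ Ioo (-1:ℝ) 1) :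
    0 < 1 - t ^ m := by
  have h1 : |t| < 1 := abs_lt.mpr ⟨ht.1, ht.2⟩
  have h2 : |t ^ m| < 1 := by
    rw [abs_pow]
    calc |t| ^ m ≤ |t| := pow_le_of_le_one (abs_nonneg t) h1.le (by omega)
    _ < 1 := h1
  have := (abs_lt.mp h2).2
  linarith

lemma contOn {m : ℕ} (hm : 1 ≤ m) :
    ContinuousOn (fun t : ℝ => (1 - t ^ m) ^ (-(1/2) : ℝ)) (Ioo (-1) 1) := by
  intro t ht
  have hb := base_pos hm ht
  have hin : ContinuousAt (fun t : ℝ => 1 - t ^ m) t :=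
    continuousAt_const.sub ((continuous_pow m).continuousAt)
  exact (hin.rpow_const (Or.inl hb.ne')).continuousWithinAt

lemma contAt {m : ℕ} (hm : 1 ≤ m) {t : ℝ} (ht : t ∈ Ioo (-1:ℝ) 1) :
    ContinuousAt (fun t : ℝ => (1 - t ^ m) ^ (-(1/2) : ℝ)) t := by
  have hin : ContinuousAt (fun t : ℝ => 1 - t ^ m) t :=
    continuousAt_const.sub ((continuous_pow m).continuousAt)
  exact hin.rpow_const (Or.inl (base_pos hm ht).ne')

lemma int01 {m : ℕ} (hm : 1 ≤ m) :
    IntervalIntegrable (fun t : ℝ => (1 - t ^ m) ^ (-(1/2) : ℝ)) volume 0 1 := by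
  have hg : IntervalIntegrable (fun t : ℝ => (1 - t) ^ (-(1/2) : ℝ)) volume 0 1 := by
    have h := (intervalIntegrable_rpow' (r := (-(1/2) : ℝ)) (by norm_num) (a := 0) (b := 1))
    have h2 := h.comp_sub_left 1
    simpa using h2.symm
  apply hg.mono_fun'
  · have : Set.uIoc (0:ℝ) 1 = Ioc 0 1 := by rw [uIoc_of_le]; norm_num
    rw [this, ← restrict_Ioo_eq_restrict_Ioc]
    exact ((contOn hm).mono (Ioo_subset_Ioo (by norm_num) le_rfl)).aestronglyMeasurable
      measurableSet_Ioo
  · have : Set.uIoc (0:ℝ) 1 = Ioc 0 1 := by rw [uIoc_of_le]; norm_num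
    rw [this, ← restrict_Ioo_eq_restrict_Ioc]
    filter_upwards [ae_restrict_mem measurableSet_Ioo] with t ht
    have h0 : (0:ℝ) ≤ t := ht.1.le
    have h1 : t < 1 := ht.2
    have hb : 0 < 1 - t ^ m := base_pos hm ⟨by linarith, h1⟩
    have hb' : 0 < 1 - t := by linarith
    have hle : 1 - t ≤ 1 - t ^ m := by
      have : t ^ m ≤ t := pow_le_of_le_one h0 h1.le (by omega)
      linarith
    rw [Real.norm_eq_abs, abs_of_nonneg (Real.rpow_nonneg hb.le _)]
    exact Real.rpow_le_rpow_of_nonpos hb' hle (by norm_num)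

lemma intgen {m : ℕ} (hm : 1 ≤ m) {a b : ℝ} (ha : a ∈ Icc (0:ℝ) 1) (hb : b ∈ Icc (0:ℝ) 1) :
    IntervalIntegrable (fun t : ℝ => (1 - t ^ m) ^ (-(1/2) : ℝ)) volume a b := by
  apply (int01 hm).mono_set'
  rw [uIoc_of_le (by norm_num : (0:ℝ) ≤ 1)]
  exact Ioc_subset_Ioc (le_min ha.1 hb.1) (max_le ha.2 hb.2)

lemma key {m : ℕ} (hm : 1 ≤ m) {a b : ℝ} (ha : 0 ≤ a) (hab : a ≤ b) (hb : b ≤ 1) :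
    b - a ≤ ∫ t in a..b, (1 - t ^ m) ^ (-(1/2) : ℝ) := by
  have h1 : (∫ _t in a..b, (1:ℝ)) = b - a := by simp
  rw [← h1]
  apply integral_mono_ae_restrict hab intervalIntegrable_const
    (intgen hm ⟨ha, hab.trans hb⟩ ⟨ha.trans hab, hb⟩)
  have hne : ∀ᵐ t : ℝ ∂(volume.restrict (Icc a b)), t ≠ 1 := by
    refine (ae_restrict_of_ae ?_)
    rw [ae_iff]
    simpa using (by simp : volume ({(1:ℝ)}) = 0)
  filter_upwards [ae_restrict_mem measurableSet_Icc, hne] with t ht htne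
  have h0 : (0:ℝ) ≤ t := le_trans ha ht.1
  have h1t : t < 1 := lt_of_le_of_ne (le_trans ht.2 hb) htne
  have hb2 : 0 < 1 - t ^ m := base_pos hm ⟨by linarith, h1t⟩
  have hle1 : 1 - t ^ m ≤ 1 := by
    have : 0 ≤ t ^ m := pow_nonneg h0 m
    linarith
  exact Real.one_le_rpow_of_pos_of_le_one_of_nonpos hb2 hle1 (by norm_num)

end CloverAux

/-- **Second-order differential identity for the clover function.**
Let `m ≥ 1`, `ϖ = 2 ∫_0^1 (1 - t^m)^(-1/2) dt`, and let `φ` be the `m`-clover function: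
on `[0, ϖ/2]` it is the inverse of the arc length integral with values in `[0, 1]`,
extended to `[0, ϖ]` by `φ(ϖ - x) = φ(x)`.  Then `φ` is twice differentiable on `(0, ϖ)`
and `φ(x)^(m-1) = -(2/m) φ''(x)` there. -/
theorem clover_second_derivative (m : ℕ) (hm : 1 ≤ m)
    (ϖ : ℝ) (hϖ : ϖ = 2 * ∫ t in (0:ℝ)..1, (1 - t ^ m) ^ (-(1/2) : ℝ))
    (φ : ℝ → ℝ)
    (hφ : ∀ x ∈ Set.Icc 0 (ϖ / 2),
      x = ∫ t in (0:ℝ)..(φ x), (1 - t ^ m) ^ (-(1/2) : ℝ))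
    (hφ01 : ∀ x ∈ Set.Icc 0 (ϖ / 2), φ x ∈ Set.Icc (0:ℝ) 1)
    (hφsymm : ∀ x ∈ Set.Icc 0 ϖ, φ (ϖ - x) = φ x) :
    ∀ x ∈ Set.Ioo 0 ϖ,
      DifferentiableAt ℝ φ x ∧ DifferentiableAt ℝ (deriv φ) x ∧
        φ x ^ (m - 1) = -(2 / m) * deriv (deriv φ) x := by
  have hm0 : (m:ℝ) ≠ 0 := Nat.cast_ne_zero.mpr (by omega)
  set F : ℝ → ℝ := fun t => (1 - t ^ m) ^ (-(1/2) : ℝ) with hFdef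
  set l : ℝ → ℝ := fun r => ∫ t in (0:ℝ)..r, F t with hldef
  -- wrapped auxiliary facts
  have hkey : ∀ {a b : ℝ}, 0 ≤ a → a ≤ b → b ≤ 1 → b - a ≤ ∫ t in a..b, F t :=
    fun ha hab hb => CloverAux.key hm ha hab hb
  have hint : ∀ {a b : ℝ}, a ∈ Set.Icc (0:ℝ) 1 → b ∈ Set.Icc (0:ℝ) 1 →
      IntervalIntegrable F volume a b := fun ha hb => CloverAux.intgen hm ha hb
  have hcontF : ∀ {t : ℝ}, t ∈ Set.Ioo (-1:ℝ) 1 → ContinuousAt F t :=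
    fun ht => CloverAux.contAt hm ht
  have hφl : ∀ x ∈ Set.Icc 0 (ϖ/2), x = l (φ x) := fun x hx => hφ x hx
  have hl0 : l 0 = 0 := intervalIntegral.integral_same
  have hl1 : ϖ / 2 = l 1 := by simp only [hldef]; rw [hϖ]; ring
  have hϖ2 : (2:ℝ) ≤ ϖ := by
    have h := hkey (le_refl (0:ℝ)) zero_le_one le_rfl
    have h2 : (1:ℝ) - 0 ≤ l 1 := h
    rw [← hl1] at h2
    linarith
  have hhalf_pos : 0 < ϖ / 2 := by linarith
  have hhalf_lt : ϖ / 2 < ϖ := by linarith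
  have hϖpos : 0 < ϖ := by linarith
  -- difference formula
  have hsub : ∀ x ∈ Set.Icc 0 (ϖ/2), ∀ y ∈ Set.Icc 0 (ϖ/2),
      x - y = ∫ t in (φ y)..(φ x), F t := by
    intro x hx y hy
    have h := intervalIntegral.integral_interval_sub_left
      (hint ⟨le_rfl, zero_le_one⟩ (hφ01 x hx))
      (hint ⟨le_rfl, zero_le_one⟩ (hφ01 y hy))
    calc x - y = l (φ x) - l (φ y) := by rw [← hφl x hx, ← hφl y hy]
    _ = _ := h
  have hmono : ∀ x ∈ Set.Icc 0 (ϖ/2), ∀ y ∈ Set.Icc 0 (ϖ/2), y ≤ x →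
      φ y ≤ φ x ∧ φ x - φ y ≤ x - y := by
    intro x hx y hy hyx
    rcases le_or_gt (φ y) (φ x) with h | h
    · refine ⟨h, ?_⟩
      have hk := hkey (hφ01 y hy).1 h (hφ01 x hx).2
      have := hsub x hx y hy
      linarith
    · exfalso
      have hk := hkey (hφ01 x hx).1 h.le (hφ01 y hy).2
      have := hsub y hy x hx
      linarith
  have hlip : LipschitzOnWith 1 φ (Set.Icc 0 (ϖ/2)) := by
    rw [lipschitzOnWith_iff_dist_le_mul]
    intro x hx y hy
    rw [NNReal.coe_one, one_mul, Real.dist_eq, Real.dist_eq]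
    rcases le_total y x with h | h
    · obtain ⟨h1, h2⟩ := hmono x hx y hy h
      rw [abs_of_nonneg (by linarith), abs_of_nonneg (by linarith)]
      exact h2
    · obtain ⟨h1, h2⟩ := hmono y hy x hx h
      rw [abs_of_nonpos (by linarith), abs_of_nonpos (by linarith)]
      linarith
  have hcontOn : ContinuousOn φ (Set.Icc 0 (ϖ/2)) := hlip.continuousOn
  have hφcontAt : ∀ a ∈ Set.Ioo 0 (ϖ/2), ContinuousAt φ a := by
    intro a ha
    exact (hcontOn a (Set.mem_Icc_of_Ioo ha)).continuousAt (Icc_mem_nhds ha.1 ha.2)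
  have hφmem : ∀ a ∈ Set.Ioo 0 (ϖ/2), φ a ∈ Set.Ioo (0:ℝ) 1 := by
    intro a ha
    have haI : a ∈ Set.Icc 0 (ϖ/2) := Set.mem_Icc_of_Ioo ha
    obtain ⟨h0, h1⟩ := hφ01 a haI
    constructor
    · rcases h0.lt_or_eq with h | h
      · exact h
      · exfalso
        have heq := hφl a haI
        rw [← h, hl0] at heq
        exact ha.1.ne' heq
    · rcases h1.lt_or_eq with h | h
      · exact h
      · exfalso
        have heq := hφl a haI
        rw [h, ← hl1] at heq
        exact ha.2.ne heq
  have hφhalf : φ (ϖ/2) = 1 := by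
    have hmem : (ϖ/2) ∈ Set.Icc 0 (ϖ/2) := ⟨hhalf_pos.le, le_rfl⟩
    obtain ⟨h0, h1⟩ := hφ01 _ hmem
    have heq := hφl _ hmem
    have hdiff : l 1 - l (φ (ϖ/2)) = ∫ t in (φ (ϖ/2))..1, F t :=
      intervalIntegral.integral_interval_sub_left
        (hint ⟨le_rfl, zero_le_one⟩ ⟨zero_le_one, le_rfl⟩)
        (hint ⟨le_rfl, zero_le_one⟩ ⟨h0, h1⟩)
    have hk := hkey h0 h1 le_rfl
    have : (1:ℝ) ≤ φ (ϖ/2) := by linarith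
    linarith
  -- base positivity for interior points
  have hbase : ∀ a ∈ Set.Ioo 0 (ϖ/2), 0 < 1 - φ a ^ m := by
    intro a ha
    obtain ⟨h0, h1⟩ := hφmem a ha
    exact CloverAux.base_pos hm ⟨by linarith, h1⟩
  -- STEP 1 : first derivative on the left half
  have step1 : ∀ a ∈ Set.Ioo 0 (ϖ/2), HasDerivAt φ ((1 - φ a ^ m) ^ ((1:ℝ)/2)) a := by
    intro a ha
    obtain ⟨h0, h1⟩ := hφmem a ha
    have hb := hbase a ha
    have hlderiv : HasDerivAt l (F (φ a)) (φ a) := by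
      apply intervalIntegral.integral_hasDerivAt_right
        (hint ⟨le_rfl, zero_le_one⟩ ⟨h0.le, h1.le⟩)
      · exact (CloverAux.contOn hm).stronglyMeasurableAtFilter isOpen_Ioo
          (φ a) ⟨by linarith, h1⟩
      · exact hcontF ⟨by linarith, h1⟩
    have hfg : ∀ᶠ y in nhds a, l (φ y) = y := by
      filter_upwards [Icc_mem_nhds ha.1 ha.2] with y hy
      exact (hφl y hy).symm
    have hne : F (φ a) ≠ 0 := (Real.rpow_pos_of_pos hb _).ne'
    have hinv := hlderiv.of_local_left_inverse (hφcontAt a ha) hne hfg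
    have hval : (F (φ a))⁻¹ = (1 - φ a ^ m) ^ ((1:ℝ)/2) := by
      have : F (φ a) = ((1 - φ a ^ m) ^ ((1:ℝ)/2))⁻¹ := by
        rw [hFdef]
        simp only []
        rw [show (-(1/2) : ℝ) = -((1:ℝ)/2) by norm_num, Real.rpow_neg hb.le]
      rw [this, inv_inv]
    rwa [hval] at hinv
  have step1d : ∀ a ∈ Set.Ioo 0 (ϖ/2), deriv φ a = (1 - φ a ^ m) ^ ((1:ℝ)/2) :=
    fun a ha => (step1 a ha).deriv
  -- STEP 2 : second derivative on the left half
  have step2 : ∀ a ∈ Set.Ioo 0 (ϖ/2),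
      HasDerivAt (deriv φ) (-((m:ℝ)/2 * φ a ^ (m-1))) a := by
    intro a ha
    have hb := hbase a ha
    have h1 : HasDerivAt (fun y => 1 - φ y ^ m)
        (-((m:ℝ) * φ a ^ (m-1) * ((1 - φ a ^ m) ^ ((1:ℝ)/2)))) a := by
      simpa using (HasDerivAt.const_sub 1 ((step1 a ha).pow m))
    have h2 := h1.rpow_const (p := (1:ℝ)/2) (Or.inl hb.ne')
    have hev : deriv φ =ᶠ[nhds a] (fun y => (1 - φ y ^ m) ^ ((1:ℝ)/2)) := by
      filter_upwards [isOpen_Ioo.mem_nhds ha] with y hy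
      exact step1d y hy
    have h3 := h2.congr_of_eventuallyEq hev
    have hDE : (1 - φ a ^ m) ^ ((1:ℝ)/2) * (1 - φ a ^ m) ^ ((1:ℝ)/2 - 1) = 1 := by
      rw [← Real.rpow_add hb]
      norm_num
    refine h3.congr_deriv ?_
    linear_combination (-((m:ℝ) * φ a ^ (m - 1) / 2)) * hDE
  -- symmetry helpers
  have hsymm' : ∀ y ∈ Set.Ioo 0 ϖ, φ y = φ (ϖ - y) :=
    fun y hy => (hφsymm y ⟨hy.1.le, hy.2.le⟩).symm
  have hrefl : ∀ a ∈ Set.Ioo (ϖ/2) ϖ, ϖ - a ∈ Set.Ioo 0 (ϖ/2) := by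
    intro a ha
    exact ⟨by linarith [ha.2], by linarith [ha.1]⟩
  have hIooR : ∀ a ∈ Set.Ioo (ϖ/2) ϖ, a ∈ Set.Ioo 0 ϖ := by
    intro a ha
    exact ⟨lt_trans hhalf_pos ha.1, ha.2⟩
  -- STEP R : first derivative on the right half
  have stepR : ∀ a ∈ Set.Ioo (ϖ/2) ϖ,
      HasDerivAt φ (-((1 - φ a ^ m) ^ ((1:ℝ)/2))) a := by
    intro a ha
    have hb := hrefl a ha
    have hev : φ =ᶠ[nhds a] (fun y => φ (ϖ - y)) := by
      filter_upwards [isOpen_Ioo.mem_nhds (hIooR a ha)] with y hy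
      exact hsymm' y hy
    have hcomp : HasDerivAt (fun y => φ (ϖ - y))
        (-((1 - φ (ϖ - a) ^ m) ^ ((1:ℝ)/2))) a := by
      have h := (step1 (ϖ - a) hb).comp a ((hasDerivAt_id a).const_sub ϖ)
      simp [mul_comm] at h ⊢
      exact h
    have := hcomp.congr_of_eventuallyEq hev
    rwa [hφsymm a ⟨(hIooR a ha).1.le, (hIooR a ha).2.le⟩] at this
  have stepRd : ∀ a ∈ Set.Ioo (ϖ/2) ϖ,
      deriv φ a = -((1 - φ a ^ m) ^ ((1:ℝ)/2)) := fun a ha => (stepR a ha).deriv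
  -- STEP R2 : second derivative on the right half
  have stepR2 : ∀ a ∈ Set.Ioo (ϖ/2) ϖ,
      HasDerivAt (deriv φ) (-((m:ℝ)/2 * φ a ^ (m-1))) a := by
    intro a ha
    have hb := hrefl a ha
    have hev : deriv φ =ᶠ[nhds a] (fun y => -(deriv φ (ϖ - y))) := by
      filter_upwards [isOpen_Ioo.mem_nhds ha] with y hy
      have hb' := hrefl y hy
      rw [stepRd y hy, step1d (ϖ - y) hb',
        hφsymm y ⟨(hIooR y hy).1.le, (hIooR y hy).2.le⟩]
    have hcomp : HasDerivAt (fun y => -(deriv φ (ϖ - y)))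
        (-((m:ℝ)/2 * φ (ϖ - a) ^ (m-1))) a := by
      have h := ((step2 (ϖ - a) hb).comp a ((hasDerivAt_id a).const_sub ϖ)).neg
      refine h.congr_deriv ?_
      ring
    have := hcomp.congr_of_eventuallyEq hev
    rwa [hφsymm a ⟨(hIooR a ha).1.le, (hIooR a ha).2.le⟩] at this
  -- limits at the midpoint
  have hφtendL : Filter.Tendsto φ (nhdsWithin (ϖ/2) (Set.Ioo 0 (ϖ/2))) (nhds 1) := by
    have h : Filter.Tendsto φ (nhdsWithin (ϖ/2) (Set.Ioo 0 (ϖ/2))) (nhds (φ (ϖ/2))) :=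
      (hcontOn (ϖ/2) ⟨hhalf_pos.le, le_rfl⟩).mono Set.Ioo_subset_Icc_self
    rwa [hφhalf] at h
  have hφtendR : Filter.Tendsto φ (nhdsWithin (ϖ/2) (Set.Ioo (ϖ/2) ϖ)) (nhds 1) := by
    have hmapsTo : Set.MapsTo (fun y => ϖ - y) (Set.Ioo (ϖ/2) ϖ) (Set.Icc 0 (ϖ/2)) := by
      intro y hy
      constructor
      · show 0 ≤ ϖ - y
        linarith [hy.2]
      · show ϖ - y ≤ ϖ/2
        linarith [hy.1]
    have houter : ContinuousWithinAt φ (Set.Icc 0 (ϖ/2)) (ϖ - ϖ/2) := by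
      rw [show ϖ - ϖ/2 = ϖ/2 by ring]
      exact hcontOn (ϖ/2) ⟨hhalf_pos.le, le_rfl⟩
    have hinner : ContinuousWithinAt (fun y : ℝ => ϖ - y) (Set.Ioo (ϖ/2) ϖ) (ϖ/2) :=
      (continuous_const.sub continuous_id).continuousWithinAt
    have hc := houter.comp hinner hmapsTo
    have hc2 : Filter.Tendsto (fun y => φ (ϖ - y))
        (nhdsWithin (ϖ/2) (Set.Ioo (ϖ/2) ϖ)) (nhds 1) := by
      have hval : φ (ϖ - ϖ/2) = 1 := by rw [show ϖ - ϖ/2 = ϖ/2 by ring, hφhalf]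
      have h3 : Filter.Tendsto (fun y => φ (ϖ - y))
          (nhdsWithin (ϖ/2) (Set.Ioo (ϖ/2) ϖ)) (nhds (φ (ϖ - ϖ/2))) := hc
      rwa [hval] at h3
    apply Filter.Tendsto.congr' ?_ hc2
    filter_upwards [self_mem_nhdsWithin] with y hy
    exact hφsymm y ⟨by linarith [hy.1], hy.2.le⟩
  have hroot : Filter.Tendsto (fun x : ℝ => x ^ ((1:ℝ)/2)) (nhds 0) (nhds 0) := by
    have h : ContinuousAt (fun x : ℝ => x ^ ((1:ℝ)/2)) 0 :=
      Real.continuousAt_rpow_const 0 ((1:ℝ)/2) (Or.inr (by norm_num))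
    have h2 : Filter.Tendsto (fun x : ℝ => x ^ ((1:ℝ)/2)) (nhds 0)
        (nhds ((0:ℝ) ^ ((1:ℝ)/2))) := h
    rwa [Real.zero_rpow (by norm_num)] at h2
  have hsqL : Filter.Tendsto (fun y => (1 - φ y ^ m) ^ ((1:ℝ)/2))
      (nhdsWithin (ϖ/2) (Set.Ioo 0 (ϖ/2))) (nhds 0) := by
    have hb : Filter.Tendsto (fun y => 1 - φ y ^ m)
        (nhdsWithin (ϖ/2) (Set.Ioo 0 (ϖ/2))) (nhds 0) := by
      simpa using (tendsto_const_nhds (x := (1:ℝ))).sub (hφtendL.pow m)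
    exact hroot.comp hb
  have hsqR : Filter.Tendsto (fun y => -((1 - φ y ^ m) ^ ((1:ℝ)/2)))
      (nhdsWithin (ϖ/2) (Set.Ioo (ϖ/2) ϖ)) (nhds 0) := by
    have hb : Filter.Tendsto (fun y => 1 - φ y ^ m)
        (nhdsWithin (ϖ/2) (Set.Ioo (ϖ/2) ϖ)) (nhds 0) := by
      simpa using (tendsto_const_nhds (x := (1:ℝ))).sub (hφtendR.pow m)
    simpa using (hroot.comp hb).neg
  have hdtendL : Filter.Tendsto (deriv φ) (nhdsWithin (ϖ/2) (Set.Iio (ϖ/2))) (nhds 0) := by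
    rw [← nhdsWithin_Ioo_eq_nhdsLT hhalf_pos]
    apply Filter.Tendsto.congr' ?_ hsqL
    filter_upwards [self_mem_nhdsWithin] with y hy
    exact (step1d y hy).symm
  have hdtendR : Filter.Tendsto (deriv φ) (nhdsWithin (ϖ/2) (Set.Ioi (ϖ/2))) (nhds 0) := by
    rw [← nhdsWithin_Ioo_eq_nhdsGT hhalf_lt]
    apply Filter.Tendsto.congr' ?_ hsqR
    filter_upwards [self_mem_nhdsWithin] with y hy
    exact (stepRd y hy).symm
  have hdiffL : DifferentiableOn ℝ φ (Set.Ioo 0 (ϖ/2)) :=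
    fun y hy => (step1 y hy).differentiableAt.differentiableWithinAt
  have hdiffR : DifferentiableOn ℝ φ (Set.Ioo (ϖ/2) ϖ) :=
    fun y hy => (stepR y hy).differentiableAt.differentiableWithinAt
  have hcontRmid : ContinuousWithinAt φ (Set.Ioo (ϖ/2) ϖ) (ϖ/2) := by
    show Filter.Tendsto φ (nhdsWithin (ϖ/2) (Set.Ioo (ϖ/2) ϖ)) (nhds (φ (ϖ/2)))
    rw [hφhalf]
    exact hφtendR
  have midφ : HasDerivAt φ 0 (ϖ/2) := by
    have hL : HasDerivWithinAt φ 0 (Set.Iic (ϖ/2)) (ϖ/2) :=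
      hasDerivWithinAt_Iic_of_tendsto_deriv hdiffL
        ((hcontOn (ϖ/2) ⟨hhalf_pos.le, le_rfl⟩).mono Set.Ioo_subset_Icc_self)
        (Ioo_mem_nhdsLT_of_mem ⟨hhalf_pos, le_rfl⟩) hdtendL
    have hR : HasDerivWithinAt φ 0 (Set.Ici (ϖ/2)) (ϖ/2) :=
      hasDerivWithinAt_Ici_of_tendsto_deriv hdiffR hcontRmid
        (Ioo_mem_nhdsGT_of_mem ⟨le_rfl, hhalf_lt⟩) hdtendR
    have h := hL.union hR
    rw [Set.Iic_union_Ici] at h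
    exact hasDerivWithinAt_univ.mp h
  have hψ0 : deriv φ (ϖ/2) = 0 := midφ.deriv
  have hψtendL : Filter.Tendsto (fun y => deriv (deriv φ) y)
      (nhdsWithin (ϖ/2) (Set.Iio (ϖ/2))) (nhds (-((m:ℝ)/2))) := by
    rw [← nhdsWithin_Ioo_eq_nhdsLT hhalf_pos]
    have hb : Filter.Tendsto (fun y => -((m:ℝ)/2 * φ y ^ (m-1)))
        (nhdsWithin (ϖ/2) (Set.Ioo 0 (ϖ/2))) (nhds (-((m:ℝ)/2))) := by
      simpa using ((tendsto_const_nhds (x := (m:ℝ)/2)).mul (hφtendL.pow (m-1))).neg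
    apply Filter.Tendsto.congr' ?_ hb
    filter_upwards [self_mem_nhdsWithin] with y hy
    exact ((step2 y hy).deriv).symm
  have hψtendR : Filter.Tendsto (fun y => deriv (deriv φ) y)
      (nhdsWithin (ϖ/2) (Set.Ioi (ϖ/2))) (nhds (-((m:ℝ)/2))) := by
    rw [← nhdsWithin_Ioo_eq_nhdsGT hhalf_lt]
    have hb : Filter.Tendsto (fun y => -((m:ℝ)/2 * φ y ^ (m-1)))
        (nhdsWithin (ϖ/2) (Set.Ioo (ϖ/2) ϖ)) (nhds (-((m:ℝ)/2))) := by
      simpa using ((tendsto_const_nhds (x := (m:ℝ)/2)).mul (hφtendR.pow (m-1))).neg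
    apply Filter.Tendsto.congr' ?_ hb
    filter_upwards [self_mem_nhdsWithin] with y hy
    exact ((stepR2 y hy).deriv).symm
  have midψ : HasDerivAt (deriv φ) (-((m:ℝ)/2)) (ϖ/2) := by
    have hdL : DifferentiableOn ℝ (deriv φ) (Set.Ioo 0 (ϖ/2)) :=
      fun y hy => (step2 y hy).differentiableAt.differentiableWithinAt
    have hdR : DifferentiableOn ℝ (deriv φ) (Set.Ioo (ϖ/2) ϖ) :=
      fun y hy => (stepR2 y hy).differentiableAt.differentiableWithinAt
    have hcL : ContinuousWithinAt (deriv φ) (Set.Ioo 0 (ϖ/2)) (ϖ/2) := by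
      show Filter.Tendsto (deriv φ) (nhdsWithin (ϖ/2) (Set.Ioo 0 (ϖ/2)))
        (nhds (deriv φ (ϖ/2)))
      rw [hψ0, nhdsWithin_Ioo_eq_nhdsLT hhalf_pos]
      exact hdtendL
    have hcR : ContinuousWithinAt (deriv φ) (Set.Ioo (ϖ/2) ϖ) (ϖ/2) := by
      show Filter.Tendsto (deriv φ) (nhdsWithin (ϖ/2) (Set.Ioo (ϖ/2) ϖ))
        (nhds (deriv φ (ϖ/2)))
      rw [hψ0, nhdsWithin_Ioo_eq_nhdsGT hhalf_lt]
      exact hdtendR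
    have hL : HasDerivWithinAt (deriv φ) (-((m:ℝ)/2)) (Set.Iic (ϖ/2)) (ϖ/2) :=
      hasDerivWithinAt_Iic_of_tendsto_deriv hdL hcL
        (Ioo_mem_nhdsLT_of_mem ⟨hhalf_pos, le_rfl⟩) hψtendL
    have hR : HasDerivWithinAt (deriv φ) (-((m:ℝ)/2)) (Set.Ici (ϖ/2)) (ϖ/2) :=
      hasDerivWithinAt_Ici_of_tendsto_deriv hdR hcR
        (Ioo_mem_nhdsGT_of_mem ⟨le_rfl, hhalf_lt⟩) hψtendR
    have h := hL.union hR
    rw [Set.Iic_union_Ici] at h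
    exact hasDerivWithinAt_univ.mp h
  -- final assembly
  intro x hx
  rcases lt_trichotomy x (ϖ/2) with h | h | h
  · have hx' : x ∈ Set.Ioo 0 (ϖ/2) := ⟨hx.1, h⟩
    refine ⟨(step1 x hx').differentiableAt, (step2 x hx').differentiableAt, ?_⟩
    rw [(step2 x hx').deriv]
    field_simp
  · subst h
    refine ⟨midφ.differentiableAt, midψ.differentiableAt, ?_⟩
    rw [midψ.deriv, hφhalf, one_pow]
    field_simp
  · have hx' : x ∈ Set.Ioo (ϖ/2) ϖ := ⟨h, hx.2⟩
    refine ⟨(stepR x hx').differentiableAt, (stepR2 x hx').differentiableAt, ?_⟩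
    rw [(stepR2 x hx').deriv]
    field_simp
end

section
/- Let m ≥ 1 be a natural number, ϖ_m = 2∫_0^1 (1-t^m)^(-1/2) dt, and let φ : ℝ → ℝ satisfy: x = ∫_0^{φ(x)} (1-t^m)^(-1/2) dt and 0 ≤ φ(x) ≤ 1 for all x ∈ [0, ϖ_m/2], and φ(ϖ_m - x) = φ(x) for all x ∈ [0, ϖ_m]. Define I(n) = ∫_0^{ϖ_m} φ(x)^n dx for integers n ≥ 0. Then for all n ≥ 0, (2(n+1) + m)·I(n+m) = 2(n+1)·I(n); equivalently, I(n+m)/I(n) = 2(n+1)/(2(n+1)+m). -/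
open MeasureTheory intervalIntegral Set Filter

lemma clover_aux_integrable (m k : ℕ) (hm : 1 ≤ m) :
    IntervalIntegrable (fun t : ℝ => t ^ k * (1 - t ^ m) ^ (-(1/2) : ℝ)) volume 0 1 := by
  have hcomp : IntervalIntegrable (fun t : ℝ => (1 - t) ^ (-(1/2) : ℝ)) volume 0 1 := by
    have h := (intervalIntegral.intervalIntegrable_rpow' (a := (0:ℝ)) (b := 1)
      (r := (-(1/2):ℝ)) (by norm_num)).comp_sub_left 1
    simpa using h.symm
  apply hcomp.mono_fun
  · rw [Set.uIoc_of_le (by norm_num : (0:ℝ) ≤ 1),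
      ← Measure.restrict_congr_set Ioo_ae_eq_Ioc]
    refine ContinuousOn.aestronglyMeasurable ?_ measurableSet_Ioo
    refine ((continuous_pow k).continuousOn).mul ?_
    refine ContinuousOn.rpow_const
      ((continuousOn_const.sub (continuous_pow m).continuousOn)) fun x hx => Or.inl ?_
    have : x ^ m < 1 := pow_lt_one₀ hx.1.le hx.2 (by omega)
    intro h; simp only [sub_eq_zero] at h; exact this.ne' h
  · rw [EventuallyLE, ae_restrict_iff' measurableSet_uIoc]
    refine Eventually.of_forall fun t ht => ?_
    rw [Set.uIoc_of_le (by norm_num : (0:ℝ) ≤ 1)] at ht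
    obtain ⟨ht0, ht1⟩ := ht
    have htm : t ^ m ≤ 1 := pow_le_one₀ ht0.le ht1
    have h0 : (0:ℝ) ≤ t ^ k * (1 - t ^ m) ^ (-(1/2) : ℝ) :=
      mul_nonneg (pow_nonneg ht0.le k) (Real.rpow_nonneg (by linarith) _)
    rw [Real.norm_eq_abs, Real.norm_eq_abs, abs_of_nonneg h0,
      abs_of_nonneg (Real.rpow_nonneg (by linarith) _)]
    rcases eq_or_lt_of_le ht1 with h1 | h1
    · subst h1
      simp [Real.zero_rpow (by norm_num : (-(1/2):ℝ) ≠ 0)]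
    · have h2 : (0:ℝ) < 1 - t := by linarith
      have h3 : 1 - t ≤ 1 - t ^ m := by
        have h4 : t ^ m ≤ t ^ 1 := pow_le_pow_of_le_one ht0.le ht1 hm
        rw [pow_one] at h4; linarith
      calc t ^ k * (1 - t ^ m) ^ (-(1/2) : ℝ)
          ≤ 1 * (1 - t ^ m) ^ (-(1/2) : ℝ) := by
            gcongr
            exact pow_le_one₀ ht0.le ht1
        _ = (1 - t ^ m) ^ (-(1/2) : ℝ) := one_mul _
        _ ≤ (1 - t) ^ (-(1/2) : ℝ) :=
            Real.rpow_le_rpow_of_nonpos h2 h3 (by norm_num)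

lemma clover_aux_rec (m : ℕ) (hm : 1 ≤ m) (n : ℕ) :
    (2 * ((n : ℝ) + 1) + m) * (∫ t in (0:ℝ)..1, t ^ (n + m) * (1 - t ^ m) ^ (-(1/2) : ℝ))
      = 2 * ((n : ℝ) + 1) * ∫ t in (0:ℝ)..1, t ^ n * (1 - t ^ m) ^ (-(1/2) : ℝ) := by
  set c1 : ℝ := (n : ℝ) + 1 with hc1
  set c2 : ℝ := (n : ℝ) + 1 + (m : ℝ) / 2 with hc2
  set E : ℝ → ℝ := fun x =>
    c1 * (x ^ n * (1 - x ^ m) ^ (-(1/2) : ℝ)) - c2 * (x ^ (n + m) * (1 - x ^ m) ^ (-(1/2) : ℝ))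
    with hE
  have hFcont : ContinuousOn (fun r : ℝ => r ^ (n + 1) * (1 - r ^ m) ^ ((1/2) : ℝ))
      (Icc 0 1) := by
    apply Continuous.continuousOn
    exact (continuous_pow (n+1)).mul
      ((continuous_const.sub (continuous_pow m)).rpow_const (fun x => Or.inr (by norm_num)))
  have hderiv : ∀ x ∈ Ioo (0:ℝ) 1,
      HasDerivAt (fun r : ℝ => r ^ (n + 1) * (1 - r ^ m) ^ ((1/2) : ℝ)) (E x) x := by
    intro x hx
    have hy : (0:ℝ) < 1 - x ^ m := by
      have : x ^ m < 1 := pow_lt_one₀ hx.1.le hx.2 (by omega)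
      linarith
    have h1 : HasDerivAt (fun r : ℝ => r ^ (n + 1)) (((n:ℝ) + 1) * x ^ n) x := by
      simpa using hasDerivAt_pow (n + 1) x
    have h2 : HasDerivAt (fun r : ℝ => 1 - r ^ m) (-((m:ℝ) * x ^ (m - 1))) x :=
      (hasDerivAt_pow m x).const_sub 1
    have h3 : HasDerivAt (fun r : ℝ => (1 - r ^ m) ^ ((1/2) : ℝ))
        ((-((m:ℝ) * x ^ (m - 1))) * ((1/2) : ℝ) * (1 - x ^ m) ^ ((1/2 : ℝ) - 1)) x :=
      h2.rpow_const (Or.inl hy.ne')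
    have h4 := h1.mul h3
    refine h4.congr_deriv ?_
    have hexp : ((1/2 : ℝ) - 1) = -(1/2 : ℝ) := by norm_num
    have hsplit : (1 - x ^ m) ^ ((1/2) : ℝ)
        = (1 - x ^ m) * (1 - x ^ m) ^ (-(1/2) : ℝ) := by
      rw [← Real.rpow_one_add' (by positivity) (by norm_num)]
      norm_num
    have hxpow : x ^ (n + m) = x ^ (n + 1) * x ^ (m - 1) := by
      rw [← pow_add]; congr 1; omega
    have hxm : x ^ m = x * x ^ (m - 1) := by
      conv_lhs => rw [show m = 1 + (m - 1) by omega]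
      rw [pow_add, pow_one]
    simp only [hE, hc1, hc2, hexp, hsplit]
    simp only [hxpow, hxm]
    ring
  have hint1 := clover_aux_integrable m n hm
  have hint2 := clover_aux_integrable m (n + m) hm
  have hintE : IntervalIntegrable E volume 0 1 := (hint1.const_mul c1).sub (hint2.const_mul c2)
  have hFTC := intervalIntegral.integral_eq_sub_of_hasDerivAt_of_le (by norm_num)
    hFcont hderiv hintE
  have hval : (fun r : ℝ => r ^ (n + 1) * (1 - r ^ m) ^ ((1/2) : ℝ)) 1
      - (fun r : ℝ => r ^ (n + 1) * (1 - r ^ m) ^ ((1/2) : ℝ)) 0 = 0 := by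
    simp [Real.zero_rpow (by norm_num : ((1:ℝ)/2) ≠ 0)]
  rw [hval] at hFTC
  rw [hE] at hFTC
  rw [intervalIntegral.integral_sub (hint1.const_mul c1) (hint2.const_mul c2),
    intervalIntegral.integral_const_mul, intervalIntegral.integral_const_mul] at hFTC
  rw [hc1] at hFTC; rw [hc2] at hFTC
  linarith

/-- **Recursion for the clover integrals.**
Let `m ≥ 1`, `ϖ = 2 ∫_0^1 (1 - t^m)^(-1/2) dt`, `φ` the `m`-clover function, and
`I(n) = ∫_0^ϖ φ(x)^n dx`.  Then `(2(n+1) + m) I(n+m) = 2(n+1) I(n)` for all `n ≥ 0`,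
i.e. `I(n+m)/I(n) = 2(n+1)/(2(n+1)+m)`. -/
theorem clover_integral_recursion (m : ℕ) (hm : 1 ≤ m)
    (ϖ : ℝ) (hϖ : ϖ = 2 * ∫ t in (0:ℝ)..1, (1 - t ^ m) ^ (-(1/2) : ℝ))
    (φ : ℝ → ℝ)
    (hφ : ∀ x ∈ Set.Icc 0 (ϖ / 2),
      x = ∫ t in (0:ℝ)..(φ x), (1 - t ^ m) ^ (-(1/2) : ℝ))
    (hφ01 : ∀ x ∈ Set.Icc 0 (ϖ / 2), φ x ∈ Set.Icc (0:ℝ) 1)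
    (hφsymm : ∀ x ∈ Set.Icc 0 ϖ, φ (ϖ - x) = φ x)
    (I : ℕ → ℝ) (hI : ∀ n : ℕ, I n = ∫ x in (0:ℝ)..ϖ, φ x ^ n) :
    ∀ n : ℕ, (2 * ((n : ℝ) + 1) + m) * I (n + m) = 2 * ((n : ℝ) + 1) * I n := by
  have key : ∀ k : ℕ,
      I k = 2 * ∫ t in (0:ℝ)..1, t ^ k * (1 - t ^ m) ^ (-(1/2) : ℝ) := by
    intro k
    set g : ℝ → ℝ := fun t => (1 - t ^ m) ^ (-(1/2) : ℝ) with hg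
    set l : ℝ → ℝ := fun r => ∫ t in (0:ℝ)..r, g t with hl
    have hgint : IntervalIntegrable g volume 0 1 := by
      have h := clover_aux_integrable m 0 hm
      simp only [pow_zero, one_mul] at h
      exact h
    have hgnn : ∀ t ∈ Icc (0:ℝ) 1, 0 ≤ g t := fun t ht =>
      Real.rpow_nonneg (sub_nonneg.mpr (pow_le_one₀ ht.1 ht.2)) _
    have hϖnn : 0 ≤ ϖ := by
      have h0 : (0:ℝ) ≤ ∫ t in (0:ℝ)..1, g t :=
        intervalIntegral.integral_nonneg zero_le_one hgnn
      rw [hϖ]; linarith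
    have hl0 : l 0 = 0 := intervalIntegral.integral_same
    have hl1 : l 1 = ϖ / 2 := by rw [hϖ]; ring
    have hlint : ∀ r ∈ Icc (0:ℝ) 1, IntervalIntegrable g volume 0 r := fun r hr =>
      hgint.mono_set (Set.uIcc_subset_uIcc Set.left_mem_uIcc
        (by rw [Set.uIcc_of_le zero_le_one]; exact hr))
    have hlmono : StrictMonoOn l (Icc 0 1) := by
      intro r hr s hs hrs
      have h1 : IntervalIntegrable g volume r s :=
        hgint.mono_set (Set.uIcc_subset_uIcc
          (by rw [Set.uIcc_of_le zero_le_one]; exact hr)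
          (by rw [Set.uIcc_of_le zero_le_one]; exact hs))
      have h2 : l r + ∫ t in r..s, g t = l s :=
        intervalIntegral.integral_add_adjacent_intervals (hlint r hr) h1
      have h3 : 0 < ∫ t in r..s, g t := by
        apply intervalIntegral.intervalIntegral_pos_of_pos_on h1 _ hrs
        intro x hx
        have hx1 : x ^ m < 1 := pow_lt_one₀ (le_trans hr.1 hx.1.le)
          (lt_of_lt_of_le hx.2 hs.2) (by omega)
        exact Real.rpow_pos_of_pos (by linarith) _
      linarith
    have hlcont : ContinuousOn l (Icc 0 1) := by
      have h := intervalIntegral.continuousOn_primitive_interval'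
        (b₁ := (0:ℝ)) (b₂ := 1) hgint Set.left_mem_uIcc
      rwa [Set.uIcc_of_le zero_le_one] at h
    have hgca : ∀ x ∈ Ioo (0:ℝ) 1, ContinuousAt g x := by
      intro x hx
      have h1 : (1:ℝ) - x ^ m ≠ 0 := by
        have : x ^ m < 1 := pow_lt_one₀ hx.1.le hx.2 (by omega)
        intro h; rw [sub_eq_zero] at h; exact this.ne' h
      exact ContinuousAt.rpow_const
        ((continuous_const.sub (continuous_pow m)).continuousAt) (Or.inl h1)
    have hgmeas : AEStronglyMeasurable g (volume.restrict (Ioo (0:ℝ) 1)) := by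
      have hcOn : ContinuousOn g (Ioo 0 1) := fun x hx => (hgca x hx).continuousWithinAt
      exact hcOn.aestronglyMeasurable measurableSet_Ioo
    have hlderiv : ∀ x ∈ Ioo (0:ℝ) 1, HasDerivAt l (g x) x := fun x hx =>
      intervalIntegral.integral_hasDerivAt_right
        (hlint x ⟨hx.1.le, hx.2.le⟩)
        ⟨Ioo 0 1, Ioo_mem_nhds hx.1 hx.2, hgmeas⟩ (hgca x hx)
    have hφl : ∀ r ∈ Icc (0:ℝ) 1, φ (l r) = r := by
      intro r hr
      have h0r : 0 ≤ l r := by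
        have h := hlmono.monotoneOn (left_mem_Icc.mpr zero_le_one) hr hr.1
        rwa [hl0] at h
      have hr2 : l r ≤ ϖ / 2 := by
        have h := hlmono.monotoneOn hr (right_mem_Icc.mpr zero_le_one) hr.2
        rwa [hl1] at h
      have h1 : l (φ (l r)) = l r := (hφ (l r) ⟨h0r, hr2⟩).symm
      exact hlmono.injOn (hφ01 (l r) ⟨h0r, hr2⟩) hr h1
    have hhalf : ∫ x in (0:ℝ)..(ϖ/2), φ x ^ k = ∫ t in (0:ℝ)..1, t ^ k * g t := by
      have himg : l '' Ioo 0 1 = Ioo 0 (ϖ/2) := by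
        apply Set.Subset.antisymm
        · rintro y ⟨x, hx, rfl⟩
          constructor
          · rw [← hl0]
            exact hlmono (left_mem_Icc.mpr zero_le_one) (Ioo_subset_Icc_self hx) hx.1
          · rw [← hl1]
            exact hlmono (Ioo_subset_Icc_self hx) (right_mem_Icc.mpr zero_le_one) hx.2
        · have h := intermediate_value_Ioo zero_le_one hlcont
          rwa [hl0, hl1] at h
      have hCoV := MeasureTheory.integral_image_eq_integral_abs_deriv_smul
        measurableSet_Ioo (fun x hx => (hlderiv x hx).hasDerivWithinAt)
        (hlmono.injOn.mono Ioo_subset_Icc_self) (fun x => φ x ^ k)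
      rw [himg] at hCoV
      rw [intervalIntegral.integral_of_le (by linarith : (0:ℝ) ≤ ϖ/2),
        MeasureTheory.integral_Ioc_eq_integral_Ioo, hCoV,
        intervalIntegral.integral_of_le zero_le_one,
        MeasureTheory.integral_Ioc_eq_integral_Ioo]
      apply MeasureTheory.setIntegral_congr_fun measurableSet_Ioo
      intro x hx
      have h1 : φ (l x) = x := hφl x (Ioo_subset_Icc_self hx)
      have h2 : 0 ≤ g x := hgnn x (Ioo_subset_Icc_self hx)
      simp only [abs_of_nonneg h2, smul_eq_mul, h1, mul_comm]
    have hsym : ∫ x in (ϖ/2)..ϖ, φ x ^ k = ∫ x in (0:ℝ)..(ϖ/2), φ x ^ k := by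
      have h1 : Set.EqOn (fun x => φ x ^ k) (fun x => φ (ϖ - x) ^ k) (Set.uIcc (ϖ/2) ϖ) := by
        intro x hx
        rw [Set.uIcc_of_le (by linarith)] at hx
        simp only [hφsymm x ⟨by linarith [hx.1], hx.2⟩]
      rw [intervalIntegral.integral_congr h1,
        intervalIntegral.integral_comp_sub_left (fun x => φ x ^ k) ϖ,
        show ϖ - ϖ = (0:ℝ) by ring, show ϖ - ϖ/2 = ϖ/2 by ring]
    have hmono : MonotoneOn (fun x => φ x ^ k) (Icc 0 (ϖ/2)) := by
      intro a ha b hb hab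
      have h1 : φ a ≤ φ b := by
        by_contra hc
        push_neg at hc
        have h2 : l (φ b) < l (φ a) := hlmono (hφ01 b hb) (hφ01 a ha) hc
        have ha' : l (φ a) = a := (hφ a ha).symm
        have hb' : l (φ b) = b := (hφ b hb).symm
        rw [ha', hb'] at h2
        linarith
      exact pow_le_pow_left₀ (hφ01 a ha).1 h1 k
    have hϖhalf : 0 ≤ ϖ := by
      have h0 : (0:ℝ) ≤ ∫ t in (0:ℝ)..1, g t :=
        intervalIntegral.integral_nonneg zero_le_one hgnn
      rw [hϖ]; linarith
    have hint1 : IntervalIntegrable (fun x => φ x ^ k) volume 0 (ϖ/2) := by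
      apply MonotoneOn.intervalIntegrable
      rwa [Set.uIcc_of_le (by linarith)]
    have hanti : AntitoneOn (fun x => φ x ^ k) (Icc (ϖ/2) ϖ) := by
      intro a ha b hb hab
      have ha' : ϖ - a ∈ Icc (0:ℝ) (ϖ/2) := ⟨by linarith [ha.2], by linarith [ha.1]⟩
      have hb' : ϖ - b ∈ Icc (0:ℝ) (ϖ/2) := ⟨by linarith [hb.2], by linarith [hb.1]⟩
      calc φ b ^ k = φ (ϖ - b) ^ k := by
              rw [hφsymm b ⟨by linarith [hb.1], hb.2⟩]
        _ ≤ φ (ϖ - a) ^ k := hmono hb' ha' (by linarith)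
        _ = φ a ^ k := by rw [hφsymm a ⟨by linarith [ha.1], ha.2⟩]
    have hint2 : IntervalIntegrable (fun x => φ x ^ k) volume (ϖ/2) ϖ := by
      apply AntitoneOn.intervalIntegrable
      rwa [Set.uIcc_of_le (by linarith)]
    have hsplit2 := intervalIntegral.integral_add_adjacent_intervals hint1 hint2
    rw [hI k, ← hsplit2, hsym, hhalf]
    ring
  intro n
  have h := clover_aux_rec m hm n
  rw [key (n + m), key n]
  linear_combination 2 * h
end

section
/- Let m ≥ 1 be a natural number, ϖ_m = 2∫_0^1 (1-t^m)^(-1/2) dt, and let φ : ℝ → ℝ satisfy: x = ∫_0^{φ(x)} (1-t^m)^(-1/2) dt and 0 ≤ φ(x) ≤ 1 for all x ∈ [0, ϖ_m/2], and φ(ϖ_m - x) = φ(x) for all x ∈ [0, ϖ_m]. Define I(n) = ∫_0^{ϖ_m} φ(x)^n dx for integers n ≥ 0. Then lim_{n→∞} I(n)/I(n+1) = 1. -/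
open Filter Topology Set MeasureTheory

/-- **Limit of the ratio of consecutive clover integrals.**
Let `m ≥ 1`, `ϖ = 2 ∫_0^1 (1 - t^m)^(-1/2) dt`, `φ` the `m`-clover function, and
`I(n) = ∫_0^ϖ φ(x)^n dx`.  Then `I(n)/I(n+1) → 1` as `n → ∞`. -/
theorem clover_integral_ratio_tendsto_one (m : ℕ) (hm : 1 ≤ m)
    (ϖ : ℝ) (hϖ : ϖ = 2 * ∫ t in (0:ℝ)..1, (1 - t ^ m) ^ (-(1/2) : ℝ))
    (φ : ℝ → ℝ)
    (hφ : ∀ x ∈ Set.Icc 0 (ϖ / 2),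
      x = ∫ t in (0:ℝ)..(φ x), (1 - t ^ m) ^ (-(1/2) : ℝ))
    (hφ01 : ∀ x ∈ Set.Icc 0 (ϖ / 2), φ x ∈ Set.Icc (0:ℝ) 1)
    (hφsymm : ∀ x ∈ Set.Icc 0 ϖ, φ (ϖ - x) = φ x)
    (I : ℕ → ℝ) (hI : ∀ n : ℕ, I n = ∫ x in (0:ℝ)..ϖ, φ x ^ n) :
    Tendsto (fun n : ℕ => I n / I (n + 1)) atTop (𝓝 1) := by
  have hmz : m ≠ 0 := by omega
  set g : ℝ → ℝ := fun t => (1 - t ^ m) ^ (-(1/2) : ℝ) with hgdef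
  -- nonnegativity of g on [0,1]
  have hg_nonneg : ∀ t ∈ Set.Icc (0:ℝ) 1, 0 ≤ g t := by
    intro t ht
    have h1 : t ^ m ≤ 1 := pow_le_one₀ ht.1 ht.2
    exact Real.rpow_nonneg (by linarith) _
  -- integrability of g on [0,1]
  have hdom : IntervalIntegrable (fun t : ℝ => (1 - t) ^ (-(1/2) : ℝ)) volume 0 1 := by
    have h1 : IntervalIntegrable (fun t : ℝ => t ^ (-(1/2) : ℝ)) volume 0 1 :=
      intervalIntegral.intervalIntegrable_rpow' (by norm_num)
    simpa using (h1.comp_sub_left 1).symm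
  have hgmeas : AEStronglyMeasurable g (volume.restrict (Set.uIoc (0:ℝ) 1)) := by
    rw [Set.uIoc_of_le (by norm_num : (0:ℝ) ≤ 1)]
    rw [← MeasureTheory.Measure.restrict_congr_set MeasureTheory.Ioo_ae_eq_Ioc]
    refine (ContinuousOn.aemeasurable ?_ measurableSet_Ioo).aestronglyMeasurable
    apply ContinuousOn.rpow_const
    · exact (continuous_const.sub (continuous_pow m)).continuousOn
    · intro x hx
      left
      have : x ^ m < 1 := pow_lt_one₀ hx.1.le hx.2 hmz
      intro h
      linarith
  have hgint01 : IntervalIntegrable g volume 0 1 := by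
    refine hdom.mono_fun' hgmeas ?_
    filter_upwards [MeasureTheory.ae_restrict_mem measurableSet_uIoc] with x hx
    rw [Set.uIoc_of_le (by norm_num : (0:ℝ) ≤ 1)] at hx
    have hx0 : 0 ≤ x := hx.1.le
    have hx1 : x ≤ 1 := hx.2
    rw [Real.norm_of_nonneg (hg_nonneg x ⟨hx0, hx1⟩)]
    rcases eq_or_lt_of_le hx1 with h | h
    · subst h
      simp only [hgdef, one_pow, sub_self]
      exact le_refl _
    · have hxm : x ^ m ≤ x := pow_le_of_le_one hx0 hx1 hmz
      exact Real.rpow_le_rpow_of_nonpos (by linarith) (by linarith) (by norm_num)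
  have hgint : ∀ u v : ℝ, u ∈ Set.Icc (0:ℝ) 1 → v ∈ Set.Icc (0:ℝ) 1 →
      IntervalIntegrable g volume u v := by
    intro u v hu hv
    apply hgint01.mono_set
    refine Set.uIcc_subset_uIcc ?_ ?_ <;>
      rw [Set.uIcc_of_le (by norm_num : (0:ℝ) ≤ 1)] <;> assumption
  -- the arclength function F
  set F : ℝ → ℝ := fun r => ∫ t in (0:ℝ)..r, g t with hFdef
  have h01 : (0:ℝ) ∈ Set.Icc (0:ℝ) 1 := by norm_num
  have h11 : (1:ℝ) ∈ Set.Icc (0:ℝ) 1 := by norm_num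
  have hF1 : F 1 = ϖ / 2 := by rw [hϖ]; ring
  have hFadd : ∀ u v : ℝ, u ∈ Set.Icc (0:ℝ) 1 → v ∈ Set.Icc (0:ℝ) 1 →
      F v - F u = ∫ t in u..v, g t := by
    intro u v hu hv
    have h := intervalIntegral.integral_add_adjacent_intervals
      (hgint 0 u h01 hu) (hgint u v hu hv)
    simp only [hFdef]
    linarith
  have hFmono : ∀ u v : ℝ, u ∈ Set.Icc (0:ℝ) 1 → v ∈ Set.Icc (0:ℝ) 1 → u ≤ v →
      F u ≤ F v := by
    intro u v hu hv huv
    have h := hFadd u v hu hv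
    have h2 : 0 ≤ ∫ t in u..v, g t :=
      intervalIntegral.integral_nonneg huv
        (fun t ht => hg_nonneg t ⟨le_trans hu.1 ht.1, le_trans ht.2 hv.2⟩)
    linarith
  have hFstrict : ∀ u v : ℝ, u ∈ Set.Icc (0:ℝ) 1 → v ∈ Set.Icc (0:ℝ) 1 → u < v →
      F u < F v := by
    intro u v hu hv huv
    have h := hFadd u v hu hv
    have h2 : 0 < ∫ t in u..v, g t := by
      apply intervalIntegral.intervalIntegral_pos_of_pos_on (hgint u v hu hv) _ huv
      intro x hx
      have hx0 : 0 ≤ x := le_trans hu.1 hx.1.le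
      have hx1 : x < 1 := lt_of_lt_of_le hx.2 hv.2
      have : x ^ m < 1 := pow_lt_one₀ hx0 hx1 hmz
      exact Real.rpow_pos_of_pos (by linarith) _
    linarith
  have hF0 : F 0 = 0 := intervalIntegral.integral_same
  have hϖpos : 0 < ϖ := by
    have h := hFstrict 0 1 h01 h11 one_pos
    rw [hF0, hF1] at h
    linarith
  have h0mem : (0:ℝ) ∈ Set.Icc (0:ℝ) (ϖ/2) := ⟨le_refl _, by linarith⟩
  have hϖ2mem : ϖ/2 ∈ Set.Icc (0:ℝ) (ϖ/2) := ⟨by linarith, le_refl _⟩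
  have hmemϖ2 : ∀ r ∈ Set.Icc (0:ℝ) 1, F r ∈ Set.Icc (0:ℝ) (ϖ/2) := by
    intro r hr
    constructor
    · have := hFmono 0 r h01 hr hr.1; rw [hF0] at this; exact this
    · have := hFmono r 1 hr h11 hr.2; rw [hF1] at this; exact this
  have hφval : ∀ x ∈ Set.Icc (0:ℝ) (ϖ/2), F (φ x) = x := fun x hx => (hφ x hx).symm
  have hφmono : ∀ x ∈ Set.Icc (0:ℝ) (ϖ/2), ∀ y ∈ Set.Icc (0:ℝ) (ϖ/2), x ≤ y →
      φ x ≤ φ y := by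
    intro x hx y hy hxy
    by_contra h
    push_neg at h
    have h2 := hFstrict (φ y) (φ x) (hφ01 y hy) (hφ01 x hx) h
    rw [hφval x hx, hφval y hy] at h2
    linarith
  have hφF : ∀ r ∈ Set.Icc (0:ℝ) 1, φ (F r) = r := by
    intro r hr
    have hFr := hmemϖ2 r hr
    have h1 : F (φ (F r)) = F r := hφval _ hFr
    have hφr : φ (F r) ∈ Set.Icc (0:ℝ) 1 := hφ01 _ hFr
    rcases lt_trichotomy (φ (F r)) r with h | h | h
    · have := hFstrict _ _ hφr hr h; rw [h1] at this; exact absurd this (lt_irrefl _)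
    · exact h
    · have := hFstrict _ _ hr hφr h; rw [h1] at this; exact absurd this (lt_irrefl _)
  -- monotone powers and integrability
  have hmonopow : ∀ n : ℕ, MonotoneOn (fun x => φ x ^ n) (Set.Icc (0:ℝ) (ϖ/2)) := by
    intro n x hx y hy hxy
    exact pow_le_pow_left₀ (hφ01 x hx).1 (hφmono x hx y hy hxy) n
  have hint : ∀ (n : ℕ) (u v : ℝ), u ∈ Set.Icc (0:ℝ) (ϖ/2) → v ∈ Set.Icc (0:ℝ) (ϖ/2) →
      IntervalIntegrable (fun x => φ x ^ n) volume u v := by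
    intro n u v hu hv
    have hsub : Set.uIcc u v ⊆ Set.Icc (0:ℝ) (ϖ/2) := by
      rw [← Set.uIcc_of_le (by linarith : (0:ℝ) ≤ ϖ/2)]
      exact Set.uIcc_subset_uIcc (by rwa [Set.uIcc_of_le (by linarith : (0:ℝ) ≤ ϖ/2)])
        (by rwa [Set.uIcc_of_le (by linarith : (0:ℝ) ≤ ϖ/2)])
    exact ((hmonopow n).mono hsub).intervalIntegrable
  set J : ℕ → ℝ := fun n => ∫ x in (0:ℝ)..(ϖ/2), φ x ^ n with hJdef
  -- symmetry: I n = 2 * J n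
  have hanti : ∀ n : ℕ, AntitoneOn (fun x => φ x ^ n) (Set.Icc (ϖ/2) ϖ) := by
    intro n x hx y hy hxy
    have hx' : ϖ - x ∈ Set.Icc (0:ℝ) (ϖ/2) := ⟨by linarith [hx.2], by linarith [hx.1]⟩
    have hy' : ϖ - y ∈ Set.Icc (0:ℝ) (ϖ/2) := ⟨by linarith [hy.2], by linarith [hy.1]⟩
    have hsx := hφsymm x ⟨by linarith [hx.1], hx.2⟩
    have hsy := hφsymm y ⟨by linarith [hy.1], hy.2⟩
    calc φ y ^ n = φ (ϖ - y) ^ n := by rw [hsy]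
      _ ≤ φ (ϖ - x) ^ n := hmonopow n hy' hx' (by linarith)
      _ = φ x ^ n := by rw [hsx]
  have hint2 : ∀ n : ℕ, IntervalIntegrable (fun x => φ x ^ n) volume (ϖ/2) ϖ := by
    intro n
    have heq : Set.uIcc (ϖ/2) ϖ = Set.Icc (ϖ/2) ϖ := Set.uIcc_of_le (by linarith)
    exact ((hanti n).mono heq.subset).intervalIntegrable
  have hIJ : ∀ n : ℕ, I n = 2 * J n := by
    intro n
    have hhalf : (∫ x in (ϖ/2)..ϖ, φ x ^ n) = J n := by
      have h3 := intervalIntegral.integral_comp_sub_left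
        (a := (0:ℝ)) (b := ϖ/2) (fun x => φ x ^ n) ϖ
      rw [show ϖ - ϖ/2 = ϖ/2 by ring, sub_zero] at h3
      rw [← h3, hJdef]
      apply intervalIntegral.integral_congr
      intro x hx
      rw [Set.uIcc_of_le (by linarith : (0:ℝ) ≤ ϖ/2)] at hx
      simp only
      rw [hφsymm x ⟨hx.1, by linarith [hx.2]⟩]
    have h4 := intervalIntegral.integral_add_adjacent_intervals
      (hint n 0 (ϖ/2) h0mem hϖ2mem) (hint2 n)
    rw [hI n, ← h4, hhalf]
    simp only [hJdef]
    ring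
  -- lower bound J n ≥ b^n (ϖ/2 - F b)
  have hJle : ∀ (n : ℕ) (b : ℝ), b ∈ Set.Icc (0:ℝ) 1 → b ^ n * (ϖ/2 - F b) ≤ J n := by
    intro n b hb
    have hFb := hmemϖ2 b hb
    have h1 := intervalIntegral.integral_add_adjacent_intervals
      (hint n 0 (F b) h0mem hFb) (hint n (F b) (ϖ/2) hFb hϖ2mem)
    have h2 : 0 ≤ ∫ x in (0:ℝ)..(F b), φ x ^ n :=
      intervalIntegral.integral_nonneg hFb.1
        (fun x hx => pow_nonneg (hφ01 x ⟨hx.1, le_trans hx.2 hFb.2⟩).1 n)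
    have h3 : (∫ _x in (F b)..(ϖ/2), b ^ n) ≤ ∫ x in (F b)..(ϖ/2), φ x ^ n := by
      apply intervalIntegral.integral_mono_on hFb.2 intervalIntegrable_const
        (hint n (F b) (ϖ/2) hFb hϖ2mem)
      intro x hx
      have hxmem : x ∈ Set.Icc (0:ℝ) (ϖ/2) := ⟨le_trans hFb.1 hx.1, hx.2⟩
      have hbx : b ≤ φ x := by
        calc b = φ (F b) := (hφF b hb).symm
          _ ≤ φ x := hφmono _ hFb _ hxmem hx.1
      exact pow_le_pow_left₀ hb.1 hbx n
    rw [intervalIntegral.integral_const, smul_eq_mul] at h3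
    have hJn : J n = (∫ x in (0:ℝ)..(F b), φ x ^ n) + ∫ x in (F b)..(ϖ/2), φ x ^ n := by
      simp only [hJdef]; linarith
    nlinarith
  have hJpos : ∀ n : ℕ, 0 < J n := by
    intro n
    have hb : (1/2 : ℝ) ∈ Set.Icc (0:ℝ) 1 := by norm_num
    have h1 := hJle n (1/2) hb
    have h2 := hFstrict (1/2) 1 hb h11 (by norm_num)
    rw [hF1] at h2
    nlinarith [pow_pos (by norm_num : (0:ℝ) < 1/2) n]
  have hJmono : ∀ n : ℕ, J (n+1) ≤ J n := by
    intro n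
    apply intervalIntegral.integral_mono_on (by linarith)
      (hint (n+1) 0 (ϖ/2) h0mem hϖ2mem) (hint n 0 (ϖ/2) h0mem hϖ2mem)
    intro x hx
    exact pow_le_pow_of_le_one (hφ01 x hx).1 (hφ01 x hx).2 (Nat.le_succ n)
  -- key upper estimate
  have hkey : ∀ a : ℝ, 0 < a → a < 1 → ∀ n : ℕ, a * J n ≤ a ^ (n+1) * ϖ + J (n+1) := by
    intro a ha0 ha1 n
    have hamem : a ∈ Set.Icc (0:ℝ) 1 := ⟨ha0.le, ha1.le⟩
    have hc := hmemϖ2 a hamem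
    have hsplit : J n = (∫ x in (0:ℝ)..(F a), φ x ^ n) + ∫ x in (F a)..(ϖ/2), φ x ^ n := by
      have := intervalIntegral.integral_add_adjacent_intervals
        (hint n 0 (F a) h0mem hc) (hint n (F a) (ϖ/2) hc hϖ2mem)
      simp only [hJdef]; linarith
    have hup1 : (∫ x in (0:ℝ)..(F a), φ x ^ n) ≤ a ^ n * F a := by
      have h : (∫ x in (0:ℝ)..(F a), φ x ^ n) ≤ ∫ _x in (0:ℝ)..(F a), a ^ n := by
        apply intervalIntegral.integral_mono_on hc.1 (hint n 0 (F a) h0mem hc)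
          intervalIntegrable_const
        intro x hx
        have hxmem : x ∈ Set.Icc (0:ℝ) (ϖ/2) := ⟨hx.1, le_trans hx.2 hc.2⟩
        have hφxa : φ x ≤ a := by
          by_contra hcon
          push_neg at hcon
          have h2 := hFstrict a (φ x) hamem (hφ01 x hxmem) hcon
          rw [hφval x hxmem] at h2
          linarith [hx.2]
        exact pow_le_pow_left₀ (hφ01 x hxmem).1 hφxa n
      rw [intervalIntegral.integral_const, sub_zero, smul_eq_mul, mul_comm] at h
      exact h
    have hup2 : a * (∫ x in (F a)..(ϖ/2), φ x ^ n) ≤ ∫ x in (F a)..(ϖ/2), φ x ^ (n+1) := by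
      rw [← intervalIntegral.integral_const_mul]
      apply intervalIntegral.integral_mono_on hc.2
        ((hint n (F a) (ϖ/2) hc hϖ2mem).const_mul a) (hint (n+1) (F a) (ϖ/2) hc hϖ2mem)
      intro x hx
      have hxmem : x ∈ Set.Icc (0:ℝ) (ϖ/2) := ⟨le_trans hc.1 hx.1, hx.2⟩
      have hax : a ≤ φ x := by
        calc a = φ (F a) := (hφF a hamem).symm
          _ ≤ φ x := hφmono _ hc _ hxmem hx.1
      calc a * φ x ^ n ≤ φ x * φ x ^ n :=
            mul_le_mul_of_nonneg_right hax (pow_nonneg (hφ01 x hxmem).1 n)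
        _ = φ x ^ (n+1) := by ring
    have hsub : (∫ x in (F a)..(ϖ/2), φ x ^ (n+1)) ≤ J (n+1) := by
      have h1 := intervalIntegral.integral_add_adjacent_intervals
        (hint (n+1) 0 (F a) h0mem hc) (hint (n+1) (F a) (ϖ/2) hc hϖ2mem)
      have h2 : 0 ≤ ∫ x in (0:ℝ)..(F a), φ x ^ (n+1) :=
        intervalIntegral.integral_nonneg hc.1
          (fun x hx => pow_nonneg (hφ01 x ⟨hx.1, le_trans hx.2 hc.2⟩).1 (n+1))
      simp only [hJdef]
      linarith
    have h5 : a * (∫ x in (0:ℝ)..(F a), φ x ^ n) ≤ a ^ (n+1) * ϖ := by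
      have h6 : a * (∫ x in (0:ℝ)..(F a), φ x ^ n) ≤ a * (a ^ n * F a) :=
        mul_le_mul_of_nonneg_left hup1 ha0.le
      have h7 : a * (a ^ n * F a) = a ^ (n+1) * F a := by rw [pow_succ]; ring
      have h8 : a ^ (n+1) * F a ≤ a ^ (n+1) * ϖ :=
        mul_le_mul_of_nonneg_left (by linarith [hc.2]) (pow_nonneg ha0.le (n+1))
      linarith
    have hdist : a * J n = a * (∫ x in (0:ℝ)..(F a), φ x ^ n)
        + a * (∫ x in (F a)..(ϖ/2), φ x ^ n) := by rw [hsplit]; ring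
    linarith [le_trans hup2 hsub]
  -- assemble
  have hratio_ge : ∀ n : ℕ, 1 ≤ J n / J (n+1) :=
    fun n => (one_le_div (hJpos (n+1))).mpr (hJmono n)
  have hfun : (fun n : ℕ => I n / I (n + 1)) = fun n : ℕ => J n / J (n+1) := by
    funext n
    rw [hIJ n, hIJ (n+1), mul_div_mul_left _ _ (by norm_num : (2:ℝ) ≠ 0)]
  rw [hfun, Metric.tendsto_atTop]
  intro ε hε
  have ha0 : 0 < (1 + ε/2)⁻¹ := by positivity
  have ha1 : (1 + ε/2)⁻¹ < 1 := by
    rw [inv_lt_one_iff₀]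
    right; linarith
  set a : ℝ := (1 + ε/2)⁻¹ with hadef
  set b : ℝ := (1 + a)/2 with hbdef
  have hab : a < b := by rw [hbdef]; linarith
  have hb1 : b < 1 := by rw [hbdef]; linarith
  have hb0 : 0 < b := by rw [hbdef]; linarith
  have hδ : 0 < ϖ/2 - F b := by
    have := hFstrict b 1 ⟨hb0.le, hb1.le⟩ h11 hb1
    rw [hF1] at this
    linarith
  set δ : ℝ := ϖ/2 - F b with hδdef
  set K : ℝ := ϖ / (b * δ) with hKdef
  have hq0 : 0 ≤ a / b := by positivity
  have hq1 : a / b < 1 := (div_lt_one hb0).mpr hab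
  have hub : ∀ n : ℕ, J n / J (n+1) ≤ K * (a/b)^n + 1/a := by
    intro n
    rw [div_le_iff₀ (hJpos (n+1))]
    rw [← mul_le_mul_iff_right₀ ha0]
    have hkey' := hkey a ha0 ha1 n
    have hJlb := hJle (n+1) b ⟨hb0.le, hb1.le⟩
    have hexp : a * ((K * (a/b)^n + 1/a) * J (n+1))
        = a * K * (a/b)^n * J (n+1) + J (n+1) := by
      field_simp
    rw [hexp]
    have hstep : a ^ (n+1) * ϖ ≤ a * K * (a/b)^n * J (n+1) := by
      have h1 : a * K * (a/b)^n * (b^(n+1) * δ) ≤ a * K * (a/b)^n * J (n+1) := by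
        apply mul_le_mul_of_nonneg_left _ (by positivity)
        rw [hδdef]
        exact hJlb
      have h2 : a * K * (a/b)^n * (b^(n+1) * δ) = a^(n+1) * ϖ := by
        rw [hKdef, div_pow]
        field_simp
        ring
      linarith
    linarith
  have htend : Tendsto (fun n : ℕ => K * (a/b)^n + 1/a) atTop (𝓝 (K * 0 + 1/a)) :=
    ((tendsto_pow_atTop_nhds_zero_of_lt_one hq0 hq1).const_mul K).add tendsto_const_nhds
  have hlim : K * 0 + 1/a < 1 + ε := by
    rw [mul_zero, zero_add, one_div, hadef, inv_inv]
    linarith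
  obtain ⟨N, hN⟩ := Filter.eventually_atTop.mp (htend.eventually_lt_const hlim)
  refine ⟨N, fun n hn => ?_⟩
  have h1 := hratio_ge n
  have h2 := le_trans (hub n) (hN n hn).le
  rw [Real.dist_eq, abs_of_nonneg (by linarith)]
  have h3 : J n / J (n+1) < 1 + ε := lt_of_le_of_lt (hub n) (hN n hn)
  linarith
end

section
/- Let m ≥ 1 be a natural number, ϖ_m = 2∫_0^1 (1-t^m)^(-1/2) dt, and let φ : ℝ → ℝ satisfy: x = ∫_0^{φ(x)} (1-t^m)^(-1/2) dt and 0 ≤ φ(x) ≤ 1 for all x ∈ [0, ϖ_m/2], and φ(ϖ_m - x) = φ(x) for all x ∈ [0, ϖ_m]. Define I(n) = ∫_0^{ϖ_m} φ(x)^n dx for integers n ≥ 0. Then for all n ≥ 0, 2(n+1)/(2(n+1)+m) ≤ I(n+1)/I(n) ≤ 1. -/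
open MeasureTheory intervalIntegral Set Real

namespace CloverProof

variable {m : ℕ}

noncomputable def g (m : ℕ) (t : ℝ) : ℝ := (1 - t ^ m) ^ (-(1/2) : ℝ)

lemma g_nonneg {t : ℝ} (ht : t ∈ Icc (0:ℝ) 1) : 0 ≤ g m t :=
  Real.rpow_nonneg (by nlinarith [pow_le_one₀ (n := m) ht.1 ht.2]) _

lemma g_pos (hm : 1 ≤ m) {t : ℝ} (ht : t ∈ Ico (0:ℝ) 1) : 0 < g m t :=
  Real.rpow_pos_of_pos (by nlinarith [pow_lt_one₀ ht.1 ht.2 (by omega : m ≠ 0)]) _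

lemma g_continuousAt (hm : 1 ≤ m) {t : ℝ} (ht : t ∈ Ioo (-1:ℝ) 1) : ContinuousAt (g m) t := by
  have h1 : |t| < 1 := abs_lt.2 ⟨ht.1, ht.2⟩
  have h2 : |t ^ m| < 1 := by
    rw [abs_pow]; exact pow_lt_one₀ (abs_nonneg t) h1 (by omega)
  have : (1 : ℝ) - t ^ m ≠ 0 := by
    have := le_abs_self (t ^ m); nlinarith
  exact ContinuousAt.rpow_const (continuousAt_const.sub ((continuous_pow m).continuousAt))
    (Or.inl this)

lemma g_intervalIntegrable (hm : 1 ≤ m) {a b : ℝ} (ha : a ∈ Icc (0:ℝ) 1) (hb : b ∈ Icc (0:ℝ) 1) :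
    IntervalIntegrable (g m) volume a b := by
  have h01 : IntervalIntegrable (g m) volume 0 1 := by
    rw [intervalIntegrable_iff_integrableOn_Ioc_of_le zero_le_one,
      integrableOn_Ioc_iff_integrableOn_Ioo]
    have hmaj : IntegrableOn (fun t : ℝ => (1 - t) ^ (-(1/2) : ℝ)) (Ioo 0 1) volume := by
      have h := (intervalIntegrable_rpow' (a := 0) (b := 1) (r := -(1/2)) (by norm_num)).comp_sub_left 1
      rw [show (1:ℝ) - 0 = 1 by norm_num, show (1:ℝ) - 1 = 0 by norm_num] at h
      have h2 := h.symm
      rw [intervalIntegrable_iff_integrableOn_Ioc_of_le zero_le_one,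
        integrableOn_Ioc_iff_integrableOn_Ioo] at h2
      exact h2
    refine hmaj.integrable.mono'
      (ContinuousOn.aestronglyMeasurable (fun t ht => (g_continuousAt hm
        ⟨by linarith [ht.1], ht.2⟩).continuousWithinAt) measurableSet_Ioo) ?_
    refine (ae_restrict_iff' measurableSet_Ioo).2 (Filter.Eventually.of_forall fun t ht => ?_)
    have ht1 : t < 1 := ht.2
    have ht0 : 0 ≤ t := le_of_lt ht.1
    rw [Real.norm_of_nonneg (g_nonneg ⟨ht0, le_of_lt ht1⟩)]
    have htm : t ^ m ≤ t := by
      calc t ^ m ≤ t ^ 1 := pow_le_pow_of_le_one ht0 (le_of_lt ht1) hm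
      _ = t := pow_one t
    exact Real.rpow_le_rpow_of_nonpos (by linarith) (by linarith) (by norm_num)
  exact h01.mono_set (uIcc_subset_uIcc (by simpa using ha) (by simpa using hb))

noncomputable def L (m : ℕ) (r : ℝ) : ℝ := ∫ t in (0:ℝ)..r, g m t

lemma L_zero : L m 0 = 0 := integral_same

lemma L_sub (hm : 1 ≤ m) {a b : ℝ} (ha : a ∈ Icc (0:ℝ) 1) (hb : b ∈ Icc (0:ℝ) 1) :
    L m b - L m a = ∫ t in a..b, g m t :=
  integral_interval_sub_left (g_intervalIntegrable hm (by norm_num) hb)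
    (g_intervalIntegrable hm (by norm_num) ha)

lemma L_strictMonoOn (hm : 1 ≤ m) : StrictMonoOn (L m) (Icc 0 1) := by
  intro a ha b hb hab
  have h : 0 < ∫ t in a..b, g m t := by
    refine intervalIntegral_pos_of_pos_on (g_intervalIntegrable hm ha hb) (fun x hx => ?_) hab
    exact g_pos hm ⟨le_of_lt (lt_of_le_of_lt ha.1 hx.1), lt_of_lt_of_le hx.2 hb.2⟩
  have := L_sub hm ha hb
  linarith

lemma L_hasDerivAt (hm : 1 ≤ m) {r : ℝ} (hr : r ∈ Ico (0:ℝ) 1) :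
    HasDerivAt (L m) (g m r) r := by
  refine integral_hasDerivAt_right
    (g_intervalIntegrable hm (by norm_num) ⟨hr.1, le_of_lt hr.2⟩)
    ⟨Ioo (-1) 1, Ioo_mem_nhds (by linarith [hr.1]) hr.2, ?_⟩
    (g_continuousAt hm ⟨by linarith [hr.1], hr.2⟩)
  exact ContinuousOn.aestronglyMeasurable
    (fun t ht => (g_continuousAt hm ht).continuousWithinAt) measurableSet_Ioo

end CloverProof

open CloverProof

/-- **Squeeze bounds for the ratio of consecutive clover integrals.**
Let `m ≥ 1`, `ϖ = 2 ∫_0^1 (1 - t^m)^(-1/2) dt`, `φ` the `m`-clover function, and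
`I(n) = ∫_0^ϖ φ(x)^n dx`.  Then `2(n+1)/(2(n+1)+m) ≤ I(n+1)/I(n) ≤ 1` for all `n ≥ 0`. -/
theorem clover_integral_ratio_bounds (m : ℕ) (hm : 1 ≤ m)
    (ϖ : ℝ) (hϖ : ϖ = 2 * ∫ t in (0:ℝ)..1, (1 - t ^ m) ^ (-(1/2) : ℝ))
    (φ : ℝ → ℝ)
    (hφ : ∀ x ∈ Set.Icc 0 (ϖ / 2),
      x = ∫ t in (0:ℝ)..(φ x), (1 - t ^ m) ^ (-(1/2) : ℝ))
    (hφ01 : ∀ x ∈ Set.Icc 0 (ϖ / 2), φ x ∈ Set.Icc (0:ℝ) 1)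
    (hφsymm : ∀ x ∈ Set.Icc 0 ϖ, φ (ϖ - x) = φ x)
    (I : ℕ → ℝ) (hI : ∀ n : ℕ, I n = ∫ x in (0:ℝ)..ϖ, φ x ^ n) :
    ∀ n : ℕ, 2 * ((n : ℝ) + 1) / (2 * ((n : ℝ) + 1) + m) ≤ I (n + 1) / I n ∧
      I (n + 1) / I n ≤ 1 := by
  -- basic facts about L and ϖ
  have hL1 : L m 1 = ϖ / 2 := by rw [hϖ]; show (∫ t in (0:ℝ)..1, (1 - t ^ m) ^ (-(1/2):ℝ)) = _; ring
  have hmem01 : ∀ r : ℝ, r ∈ Icc (0:ℝ) 1 → True := fun _ _ => trivial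
  have hLsm := L_strictMonoOn (m := m) hm
  have hLmono := hLsm.monotoneOn
  have h2pos : (0:ℝ) < ϖ / 2 := by
    have := hLsm (left_mem_Icc.2 zero_le_one) (right_mem_Icc.2 zero_le_one) zero_lt_one
    rw [L_zero, hL1] at this; exact this
  have hϖpos : 0 < ϖ := by linarith
  -- φ is a two-sided inverse of L
  have hLφ : ∀ x ∈ Icc (0:ℝ) (ϖ/2), L m (φ x) = x := fun x hx => (hφ x hx).symm
  have hLinj : InjOn (L m) (Icc 0 1) := hLsm.injOn
  have hφ0 : φ 0 = 0 := by
    have h0 : (0:ℝ) ∈ Icc (0:ℝ) (ϖ/2) := ⟨le_refl _, le_of_lt h2pos⟩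
    have := hLφ 0 h0
    have h00 : L m (0:ℝ) = 0 := L_zero
    exact hLinj (hφ01 0 h0) (by norm_num) (by rw [this, h00])
  have hφhalf : φ (ϖ/2) = 1 := by
    have h0 : (ϖ/2) ∈ Icc (0:ℝ) (ϖ/2) := ⟨le_of_lt h2pos, le_refl _⟩
    exact hLinj (hφ01 _ h0) (by norm_num) (by rw [hLφ _ h0, hL1])
  have hφmono : MonotoneOn φ (Icc 0 (ϖ/2)) := by
    intro x hx y hy hxy
    by_contra h
    push_neg at h
    have := hLsm (hφ01 y hy) (hφ01 x hx) h
    rw [hLφ x hx, hLφ y hy] at this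
    linarith
  have hφsec : ∀ r ∈ Icc (0:ℝ) 1, φ (L m r) = r := by
    intro r hr
    have hLr : L m r ∈ Icc (0:ℝ) (ϖ/2) := by
      constructor
      · have := hLmono (left_mem_Icc.2 zero_le_one) hr hr.1
        rwa [L_zero] at this
      · have := hLmono hr (right_mem_Icc.2 zero_le_one) hr.2
        rwa [hL1] at this
    exact hLinj (hφ01 _ hLr) hr (hLφ _ hLr)
  -- continuity of φ on [0, ϖ/2]
  have hφcont : ContinuousOn φ (Icc 0 (ϖ/2)) := by
    set ψ : ℝ → ℝ := fun x => if x < 0 then x else if x ≤ ϖ/2 then φ x else x - ϖ/2 + 1 with hψ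
    have hψmono : Monotone ψ := by
      intro x y hxy
      simp only [hψ]
      by_cases hy0 : y < 0
      · rw [if_pos (lt_of_le_of_lt hxy hy0), if_pos hy0]; exact hxy
      · rw [if_neg hy0]
        push_neg at hy0
        by_cases hy2 : y ≤ ϖ/2
        · rw [if_pos hy2]
          by_cases hx0 : x < 0
          · rw [if_pos hx0]
            have := (hφ01 y ⟨hy0, hy2⟩).1
            linarith
          · push_neg at hx0
            rw [if_neg (not_lt.2 hx0), if_pos (le_trans hxy hy2)]
            exact hφmono ⟨hx0, le_trans hxy hy2⟩ ⟨hy0, hy2⟩ hxy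
        · rw [if_neg hy2]
          push_neg at hy2
          by_cases hx0 : x < 0
          · rw [if_pos hx0]; linarith
          · push_neg at hx0
            rw [if_neg (not_lt.2 hx0)]
            by_cases hx2 : x ≤ ϖ/2
            · rw [if_pos hx2]
              have := (hφ01 x ⟨hx0, hx2⟩).2
              linarith
            · rw [if_neg hx2]; linarith
    have hψsurj : Function.Surjective ψ := by
      intro y
      by_cases hy0 : y < 0
      · exact ⟨y, by simp [hψ, if_pos hy0]⟩
      · push_neg at hy0
        by_cases hy1 : y ≤ 1
        · refine ⟨L m y, ?_⟩
          have hLr : L m y ∈ Icc (0:ℝ) (ϖ/2) := by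
            constructor
            · have := hLmono (left_mem_Icc.2 zero_le_one) ⟨hy0, hy1⟩ hy0
              rwa [L_zero] at this
            · have := hLmono ⟨hy0, hy1⟩ (right_mem_Icc.2 zero_le_one) hy1
              rwa [hL1] at this
          simp only [hψ]
          rw [if_neg (not_lt.2 hLr.1), if_pos hLr.2]
          exact hφsec y ⟨hy0, hy1⟩
        · push_neg at hy1
          refine ⟨y - 1 + ϖ/2, ?_⟩
          simp only [hψ]
          rw [if_neg (by push_neg; linarith), if_neg (by push_neg; linarith)]
          ring
    have hψc : Continuous ψ := hψmono.continuous_of_surjective hψsurj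
    refine (hψc.continuousOn).congr ?_
    intro x hx
    simp only [hψ]
    rw [if_neg (not_lt.2 hx.1), if_pos hx.2]
  -- derivative of φ
  have hφderiv : ∀ x ∈ Ioo (0:ℝ) (ϖ/2), HasDerivAt φ (Real.sqrt (1 - φ x ^ m)) x := by
    intro x hx
    have hxI : x ∈ Icc (0:ℝ) (ϖ/2) := ⟨le_of_lt hx.1, le_of_lt hx.2⟩
    have hr01 : φ x ∈ Icc (0:ℝ) 1 := hφ01 x hxI
    have hrne1 : φ x ≠ 1 := by
      intro h
      have := hLφ x hxI
      rw [h, hL1] at this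
      linarith [hx.2]
    have hr : φ x ∈ Ico (0:ℝ) 1 := ⟨hr01.1, lt_of_le_of_ne hr01.2 hrne1⟩
    have hdL : HasDerivAt (L m) (g m (φ x)) (φ x) := L_hasDerivAt hm hr
    have hg0 : g m (φ x) ≠ 0 := ne_of_gt (g_pos hm hr)
    have hcφ : ContinuousAt φ x :=
      hφcont.continuousAt (Icc_mem_nhds hx.1 hx.2)
    have hev : ∀ᶠ y in nhds x, L m (φ y) = y :=
      Filter.eventually_of_mem (Icc_mem_nhds hx.1 hx.2) (fun y hy => hLφ y hy)
    have hd := HasDerivAt.of_local_left_inverse hcφ hdL hg0 hev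
    have hpos : 0 < 1 - φ x ^ m := by
      nlinarith [pow_lt_one₀ hr.1 hr.2 (by omega : m ≠ 0)]
    have hinv : (g m (φ x))⁻¹ = Real.sqrt (1 - φ x ^ m) := by
      show ((1 - φ x ^ m) ^ (-(1/2) : ℝ))⁻¹ = _
      rw [Real.rpow_neg (le_of_lt hpos), inv_inv, Real.sqrt_eq_rpow]
    rwa [hinv] at hd
  -- the half-period integrals K
  set K : ℕ → ℝ := fun j => ∫ x in (0:ℝ)..(ϖ/2), φ x ^ j with hK
  have hKint : ∀ j : ℕ, IntervalIntegrable (fun x => φ x ^ j) volume 0 (ϖ/2) := by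
    intro j
    refine ContinuousOn.intervalIntegrable ?_
    rw [uIcc_of_le (le_of_lt h2pos)]
    exact hφcont.pow j
  have hKmono : ∀ j k : ℕ, j ≤ k → K k ≤ K j := by
    intro j k hjk
    refine integral_mono_on (le_of_lt h2pos) (hKint k) (hKint j) (fun x hx => ?_)
    exact pow_le_pow_of_le_one (hφ01 x hx).1 (hφ01 x hx).2 hjk
  have hφposIoo : ∀ x ∈ Ioo (0:ℝ) (ϖ/2), 0 < φ x := by
    intro x hx
    rcases lt_or_eq_of_le (hφ01 x ⟨le_of_lt hx.1, le_of_lt hx.2⟩).1 with h | h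
    · exact h
    · exfalso
      have := hLφ x ⟨le_of_lt hx.1, le_of_lt hx.2⟩
      rw [← h, L_zero] at this
      linarith [hx.1]
  have hKpos : ∀ j : ℕ, 0 < K j := by
    intro j
    exact intervalIntegral_pos_of_pos_on (hKint j)
      (fun x hx => pow_pos (hφposIoo x hx) j) h2pos
  -- the recurrence via FTC
  have hKrec : ∀ n : ℕ, ((n:ℝ) + 1) * K n = (((n:ℝ) + 1) + (m:ℝ)/2) * K (n + m) := by
    intro n
    set F : ℝ → ℝ := fun x => φ x ^ (n+1) * Real.sqrt (1 - φ x ^ m) with hF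
    set D : ℝ → ℝ := fun x =>
      ((n:ℝ) + 1) * φ x ^ n - (((n:ℝ) + 1) + (m:ℝ)/2) * φ x ^ (n + m) with hD
    have hder : ∀ x ∈ Ioo (0:ℝ) (ϖ/2), HasDerivAt F (D x) x := by
      intro x hx
      have hxI : x ∈ Icc (0:ℝ) (ϖ/2) := ⟨le_of_lt hx.1, le_of_lt hx.2⟩
      have hr01 : φ x ∈ Icc (0:ℝ) 1 := hφ01 x hxI
      have hrne1 : φ x ≠ 1 := by
        intro h
        have := hLφ x hxI
        rw [h, hL1] at this
        linarith [hx.2]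
      have hpos : 0 < 1 - φ x ^ m := by
        nlinarith [pow_lt_one₀ hr01.1 (lt_of_le_of_ne hr01.2 hrne1) (by omega : m ≠ 0)]
      have hφd := hφderiv x hx
      have hs2 : Real.sqrt (1 - φ x ^ m) * Real.sqrt (1 - φ x ^ m) = 1 - φ x ^ m :=
        Real.mul_self_sqrt (le_of_lt hpos)
      have hspos : 0 < Real.sqrt (1 - φ x ^ m) := Real.sqrt_pos.2 hpos
      have h1 : HasDerivAt (fun y => φ y ^ (n+1))
          ((↑(n+1) : ℝ) * φ x ^ n * Real.sqrt (1 - φ x ^ m)) x := by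
        simpa using hφd.fun_pow (n+1)
      have h2 : HasDerivAt (fun y => 1 - φ y ^ m)
          (-((↑m : ℝ) * φ x ^ (m-1) * Real.sqrt (1 - φ x ^ m))) x :=
        (hφd.pow m).const_sub 1
      have h3 : HasDerivAt (fun y => Real.sqrt (1 - φ y ^ m))
          (-((↑m : ℝ) * φ x ^ (m-1) * Real.sqrt (1 - φ x ^ m)) /
            (2 * Real.sqrt (1 - φ x ^ m))) x :=
        h2.sqrt (ne_of_gt hpos)
      have hsne : Real.sqrt (1 - φ x ^ m) ≠ 0 := ne_of_gt hspos
      have h3' : HasDerivAt (fun y => Real.sqrt (1 - φ y ^ m))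
          (-((↑m : ℝ)/2 * φ x ^ (m-1))) x := by
        convert h3 using 1
        field_simp
      have hmul := h1.fun_mul h3'
      have hpow : φ x ^ (n+1) * φ x ^ (m-1) = φ x ^ (n + m) := by
        rw [← pow_add]; congr 1; omega
      convert (show HasDerivAt F _ x from hmul) using 1
      rw [hD]
      push_cast
      linear_combination (-(((n:ℝ)+1)) * φ x ^ n) * hs2 + ((m:ℝ)/2) * hpow
    have hFcont : ContinuousOn F (Icc 0 (ϖ/2)) :=
      (hφcont.pow (n+1)).mul ((continuousOn_const.sub (hφcont.pow m)).sqrt)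
    have hDcont : ContinuousOn D (Icc 0 (ϖ/2)) :=
      (continuousOn_const.mul (hφcont.pow n)).sub
        (continuousOn_const.mul (hφcont.pow (n+m)))
    have hDint : IntervalIntegrable D volume 0 (ϖ/2) := by
      refine ContinuousOn.intervalIntegrable ?_
      rw [uIcc_of_le (le_of_lt h2pos)]
      exact hDcont
    have hFTC : (∫ x in (0:ℝ)..(ϖ/2), D x) = F (ϖ/2) - F 0 :=
      integral_eq_sub_of_hasDeriv_right_of_le (le_of_lt h2pos) hFcont
        (fun x hx => (hder x hx).hasDerivWithinAt) hDint
    have hF0 : F 0 = 0 := by simp [hF, hφ0]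
    have hFhalf : F (ϖ/2) = 0 := by simp [hF, hφhalf]
    have hsplit : (∫ x in (0:ℝ)..(ϖ/2), D x)
        = ((n:ℝ) + 1) * K n - (((n:ℝ) + 1) + (m:ℝ)/2) * K (n + m) := by
      rw [hK]
      rw [show (fun x => D x) = fun x => (((n:ℝ)+1) * φ x ^ n -
        (((n:ℝ) + 1) + (m:ℝ)/2) * φ x ^ (n+m)) from rfl]
      rw [integral_sub ((hKint n).const_mul _) ((hKint (n+m)).const_mul _),
        intervalIntegral.integral_const_mul, intervalIntegral.integral_const_mul]
    rw [hFTC, hF0, hFhalf] at hsplit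
    linarith
  -- I j = 2 * K j
  have hφcont2 : ContinuousOn φ (Icc (ϖ/2) ϖ) := by
    have hmaps : MapsTo (fun x => ϖ - x) (Icc (ϖ/2) ϖ) (Icc 0 (ϖ/2)) := by
      intro x hx
      refine ⟨?_, ?_⟩
      · show 0 ≤ ϖ - x; linarith [hx.2]
      · show ϖ - x ≤ ϖ/2; linarith [hx.1]
    refine (hφcont.comp ((continuous_const.sub continuous_id).continuousOn) hmaps).congr ?_
    intro x hx
    exact (hφsymm x ⟨by linarith [hx.1], hx.2⟩).symm
  have hIK : ∀ j : ℕ, I j = 2 * K j := by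
    intro j
    have hint2 : IntervalIntegrable (fun x => φ x ^ j) volume (ϖ/2) ϖ := by
      refine ContinuousOn.intervalIntegrable ?_
      rw [uIcc_of_le (by linarith : ϖ/2 ≤ ϖ)]
      exact hφcont2.pow j
    have hadd := integral_add_adjacent_intervals (hKint j) hint2
    have hcomp := integral_comp_sub_left (a := (0:ℝ)) (b := ϖ/2) (fun y => φ y ^ j) ϖ
    rw [show ϖ - ϖ/2 = ϖ/2 by ring, show ϖ - 0 = ϖ by ring] at hcomp
    have hcongr : (∫ x in (0:ℝ)..(ϖ/2), φ (ϖ - x) ^ j) = ∫ x in (0:ℝ)..(ϖ/2), φ x ^ j := by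
      refine integral_congr (fun x hx => ?_)
      rw [uIcc_of_le (le_of_lt h2pos)] at hx
      rw [hφsymm x ⟨hx.1, by linarith [hx.2]⟩]
    rw [hcongr] at hcomp
    rw [hI j, ← hadd, ← hcomp, hK]
    ring
  -- conclusion
  intro n
  have hrat : I (n+1) / I n = K (n+1) / K n := by
    rw [hIK, hIK, mul_div_mul_left _ _ (two_ne_zero)]
  constructor
  · rw [hrat]
    have hle : K (n + m) ≤ K (n + 1) := hKmono (n+1) (n+m) (by omega)
    have hden : (0:ℝ) < 2 * ((n:ℝ) + 1) + m := by positivity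
    have h2' : (2 * ((n:ℝ) + 1) + m) * K (n + m) = 2 * ((n:ℝ) + 1) * K n := by
      linear_combination (-2 : ℝ) * hKrec n
    have hKnm : K (n + m) = (2 * ((n:ℝ) + 1) / (2 * ((n:ℝ) + 1) + m)) * K n := by
      rw [div_mul_eq_mul_div, eq_div_iff (ne_of_gt hden)]
      linear_combination h2'
    have heq : K (n + m) / K n = 2 * ((n:ℝ) + 1) / (2 * ((n:ℝ) + 1) + m) := by
      rw [hKnm, mul_div_assoc, div_self (ne_of_gt (hKpos n)), mul_one]
    calc 2 * ((n:ℝ) + 1) / (2 * ((n:ℝ) + 1) + m)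
        = K (n + m) / K n := heq.symm
      _ ≤ K (n + 1) / K n := by gcongr; exact le_of_lt (hKpos n)
  · rw [hrat]
    exact div_le_one_of_le₀ (hKmono n (n+1) (Nat.le_succ n)) (le_of_lt (hKpos n))
end

section
/- Let m ≥ 1 be a natural number, ϖ_m = 2∫_0^1 (1-t^m)^(-1/2) dt, and let φ : ℝ → ℝ satisfy: x = ∫_0^{φ(x)} (1-t^m)^(-1/2) dt and 0 ≤ φ(x) ≤ 1 for all x ∈ [0, ϖ_m/2], and φ(ϖ_m - x) = φ(x) for all x ∈ [0, ϖ_m]. Then ∫_0^{ϖ_m} φ(x)^(m-1) dx = 4/m. -/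
open Set MeasureTheory intervalIntegral Real

lemma clover_integrable (m : ℕ) (hm : 1 ≤ m) {a b : ℝ} (ha : a ∈ Icc (0:ℝ) 1)
    (hb : b ∈ Icc (0:ℝ) 1) :
    IntervalIntegrable (fun t : ℝ => (1 - t ^ m) ^ (-(1/2) : ℝ)) volume a b := by
  have hg : IntervalIntegrable (fun t : ℝ => (1 - t) ^ (-(1/2) : ℝ)) volume a b := by
    have := (intervalIntegrable_rpow' (a := 1 - a) (b := 1 - b) (r := -(1/2)) (by norm_num)).comp_sub_left 1
    simpa using this
  refine hg.mono_fun ?_ ?_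
  · apply Measurable.aestronglyMeasurable
    fun_prop
  · filter_upwards [ae_restrict_mem measurableSet_uIoc] with t ht
    have ht' : t ∈ Icc (0:ℝ) 1 := by
      rcases Set.mem_uIoc.1 ht with ht | ht
      · exact ⟨le_trans ha.1 ht.1.le, le_trans ht.2 hb.2⟩
      · exact ⟨le_trans hb.1 ht.1.le, le_trans ht.2 ha.2⟩
    have h1 : (0:ℝ) ≤ 1 - t ^ m := by
      have : t ^ m ≤ 1 := pow_le_one₀ ht'.1 ht'.2
      linarith
    have h2 : 1 - t ≤ 1 - t ^ m := by
      have : t ^ m ≤ t := by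
        calc t ^ m ≤ t ^ 1 := pow_le_pow_of_le_one ht'.1 ht'.2 hm
        _ = t := pow_one t
      linarith
    rw [Real.norm_eq_abs, Real.norm_eq_abs, abs_of_nonneg (rpow_nonneg h1 _),
      abs_of_nonneg (rpow_nonneg (by linarith [ht'.2] : (0:ℝ) ≤ 1 - t) _)]
    rcases eq_or_lt_of_le (by linarith [ht'.2] : (0:ℝ) ≤ 1 - t) with h | h
    · have ht1 : t = 1 := by linarith
      have : 1 - t ^ m = 0 := by simp [ht1]
      rw [this, Real.zero_rpow (by norm_num)]
      exact rpow_nonneg (by linarith) _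
    · exact Real.rpow_le_rpow_of_nonpos h h2 (by norm_num)

/-- **Initial value `I_m(m-1) = 4/m`.**
Let `m ≥ 1`, `ϖ = 2 ∫_0^1 (1 - t^m)^(-1/2) dt`, and `φ` the `m`-clover function.
Then `∫_0^ϖ φ(x)^(m-1) dx = 4/m`. -/
theorem clover_integral_m_sub_one (m : ℕ) (hm : 1 ≤ m)
    (ϖ : ℝ) (hϖ : ϖ = 2 * ∫ t in (0:ℝ)..1, (1 - t ^ m) ^ (-(1/2) : ℝ))
    (φ : ℝ → ℝ)
    (hφ : ∀ x ∈ Set.Icc 0 (ϖ / 2),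
      x = ∫ t in (0:ℝ)..(φ x), (1 - t ^ m) ^ (-(1/2) : ℝ))
    (hφ01 : ∀ x ∈ Set.Icc 0 (ϖ / 2), φ x ∈ Set.Icc (0:ℝ) 1)
    (hφsymm : ∀ x ∈ Set.Icc 0 ϖ, φ (ϖ - x) = φ x) :
    ∫ x in (0:ℝ)..ϖ, φ x ^ (m - 1) = 4 / m := by
  set f : ℝ → ℝ := fun t => (1 - t ^ m) ^ (-(1/2) : ℝ) with hf
  set l : ℝ → ℝ := fun r => ∫ t in (0:ℝ)..r, f t with hldef
  have hint : ∀ {a b : ℝ}, a ∈ Icc (0:ℝ) 1 → b ∈ Icc (0:ℝ) 1 →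
      IntervalIntegrable f volume a b := fun ha hb => clover_integrable m hm ha hb
  have hmem01 : (0:ℝ) ∈ Icc (0:ℝ) 1 := ⟨le_rfl, zero_le_one⟩
  have hmem11 : (1:ℝ) ∈ Icc (0:ℝ) 1 := ⟨zero_le_one, le_rfl⟩
  have hl0 : l 0 = 0 := integral_same
  have hfpos : ∀ t ∈ Ico (0:ℝ) 1, 0 < f t := by
    intro t ht
    have : t ^ m < 1 := pow_lt_one₀ ht.1 ht.2 (by omega)
    exact Real.rpow_pos_of_pos (by linarith) _
  have hmono : StrictMonoOn l (Icc 0 1) := by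
    intro a ha b hb hab
    have hadd : l a + ∫ t in a..b, f t = l b :=
      integral_add_adjacent_intervals (hint hmem01 ha) (hint ha hb)
    have hpos : 0 < ∫ t in a..b, f t := by
      apply intervalIntegral_pos_of_pos_on (hint ha hb) _ hab
      intro x hx
      exact hfpos x ⟨le_trans ha.1 hx.1.le, lt_of_lt_of_le hx.2 hb.2⟩
    linarith
  have hmono' : MonotoneOn l (Icc 0 1) := hmono.monotoneOn
  have hφ' : ∀ x ∈ Icc (0:ℝ) (ϖ / 2), l (φ x) = x := fun x hx => (hφ x hx).symm
  have hc : ϖ / 2 = l 1 := by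
    show ϖ / 2 = ∫ t in (0:ℝ)..1, f t
    rw [hϖ]; ring
  have hcpos : 0 < ϖ / 2 := by
    rw [hc, ← hl0]; exact hmono hmem01 hmem11 one_pos
  have hlmem : ∀ r ∈ Icc (0:ℝ) 1, l r ∈ Icc 0 (ϖ / 2) := by
    intro r hr
    constructor
    · rw [← hl0]; exact hmono' hmem01 hr hr.1
    · rw [hc]; exact hmono' hr hmem11 hr.2
  have hφl : ∀ r ∈ Icc (0:ℝ) 1, φ (l r) = r := by
    intro r hr
    have h1 : l (φ (l r)) = l r := hφ' (l r) (hlmem r hr)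
    exact hmono.injOn (hφ01 _ (hlmem r hr)) hr h1
  have hφ0 : φ 0 = 0 := by have := hφl 0 hmem01; rwa [hl0] at this
  have hφc : φ (ϖ / 2) = 1 := by have := hφl 1 hmem11; rwa [← hc] at this
  have hφmono : StrictMonoOn φ (Icc 0 (ϖ / 2)) := by
    intro x hx y hy hxy
    by_contra h
    push_neg at h
    have h1 : l (φ y) ≤ l (φ x) := hmono' (hφ01 y hy) (hφ01 x hx) h
    rw [hφ' x hx, hφ' y hy] at h1
    linarith
  -- continuity of φ on [0, ϖ/2]
  have hright : ∀ a ∈ Ico (0:ℝ) (ϖ / 2), ContinuousWithinAt φ (Ici a) a := by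
    intro a ha
    have ha' : a ∈ Icc (0:ℝ) (ϖ / 2) := ⟨ha.1, ha.2.le⟩
    refine hφmono.continuousWithinAt_right_of_exists_between
      (Icc_mem_nhdsGE_of_mem ha) ?_
    intro b hb
    have hφa1 : φ a < 1 := by
      rw [← hφc]
      exact hφmono ha' ⟨hcpos.le, le_rfl⟩ ha.2
    refine ⟨l (min b 1), hlmem _ ⟨le_trans (hφ01 a ha').1 (le_min hb.le (hφa1.le)) , min_le_right _ _⟩, ?_⟩
    rw [hφl _ ⟨le_trans (hφ01 a ha').1 (le_min hb.le hφa1.le), min_le_right _ _⟩]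
    exact ⟨lt_min hb hφa1, min_le_left _ _⟩
  have hleft : ∀ a ∈ Ioc (0:ℝ) (ϖ / 2), ContinuousWithinAt φ (Iic a) a := by
    intro a ha
    have ha' : a ∈ Icc (0:ℝ) (ϖ / 2) := ⟨ha.1.le, ha.2⟩
    refine hφmono.continuousWithinAt_left_of_exists_between
      (Icc_mem_nhdsLE_of_mem ha) ?_
    intro b hb
    have hφa0 : 0 < φ a := by
      rw [← hφ0]
      exact hφmono ⟨le_rfl, hcpos.le⟩ ha' ha.1
    have hmax : max b 0 ∈ Icc (0:ℝ) 1 :=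
      ⟨le_max_right _ _, le_trans (max_le hb.le hφa0.le) (hφ01 a ha').2⟩
    refine ⟨l (max b 0), hlmem _ hmax, ?_⟩
    rw [hφl _ hmax]
    exact ⟨le_max_left _ _, max_lt hb hφa0⟩
  have hφcontAt : ∀ a ∈ Ioo (0:ℝ) (ϖ / 2), ContinuousAt φ a := by
    intro a ha
    have h1 := hright a ⟨ha.1.le, ha.2⟩
    have h2 := hleft a ⟨ha.1, ha.2.le⟩
    have := h1.union h2
    rw [Set.union_comm, Iic_union_Ici] at this
    rwa [continuousWithinAt_univ] at this
  have hφcont : ContinuousOn φ (Icc 0 (ϖ / 2)) := by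
    intro a ha
    rcases eq_or_lt_of_le ha.1 with h0 | h0
    · have := hright a ⟨ha.1, by rw [← h0]; exact hcpos⟩
      exact this.mono (fun x hx => by rw [← h0]; exact hx.1)
    · rcases eq_or_lt_of_le ha.2 with h1 | h1
      · have := hleft a ⟨h0, ha.2⟩
        exact this.mono (fun x hx => by rw [h1]; exact hx.2)
      · exact (hφcontAt a ⟨h0, h1⟩).continuousWithinAt
  -- derivative of φ on the interior
  have hφx1 : ∀ x ∈ Ico (0:ℝ) (ϖ / 2), φ x < 1 := by
    intro x hx
    rw [← hφc]
    exact hφmono ⟨hx.1, hx.2.le⟩ ⟨hcpos.le, le_rfl⟩ hx.2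
  have hφderiv : ∀ x ∈ Ioo (0:ℝ) (ϖ / 2),
      HasDerivAt φ ((1 - φ x ^ m) ^ ((1/2) : ℝ)) x := by
    intro x hx
    have hx' : x ∈ Icc (0:ℝ) (ϖ / 2) := ⟨hx.1.le, hx.2.le⟩
    have hlt1 : φ x < 1 := hφx1 x ⟨hx.1.le, hx.2⟩
    have hbase : 0 < 1 - φ x ^ m := by
      have : φ x ^ m < 1 := pow_lt_one₀ (hφ01 x hx').1 hlt1 (by omega)
      linarith
    have hcontf : ContinuousAt f (φ x) := by
      apply ContinuousAt.rpow_const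
      · exact (continuousAt_const.sub ((continuousAt_id).pow m))
      · exact Or.inl hbase.ne'
    have hfmeas : Measurable f := by rw [hf]; fun_prop
    have hlder : HasDerivAt l (f (φ x)) (φ x) :=
      integral_hasDerivAt_right (hint hmem01 (hφ01 x hx'))
        hfmeas.aestronglyMeasurable.stronglyMeasurableAtFilter
        hcontf
    have hfne : f (φ x) ≠ 0 := (Real.rpow_pos_of_pos hbase _).ne'
    have hev : ∀ᶠ y in nhds x, l (φ y) = y := by
      filter_upwards [Ioo_mem_nhds hx.1 hx.2] with y hy
      exact (hφ y ⟨hy.1.le, hy.2.le⟩).symm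
    have := HasDerivAt.of_local_left_inverse (hφcontAt x hx) hlder hfne hev
    have heq : (f (φ x))⁻¹ = (1 - φ x ^ m) ^ ((1/2) : ℝ) := by
      show ((1 - φ x ^ m) ^ (-(1/2) : ℝ))⁻¹ = (1 - φ x ^ m) ^ ((1/2) : ℝ)
      rw [Real.rpow_neg hbase.le, inv_inv]
    rwa [heq] at this
  -- the antiderivative
  set F : ℝ → ℝ := fun x => -(2 / (m:ℝ)) * (1 - φ x ^ m) ^ ((1/2) : ℝ) with hF
  have hm0 : (m:ℝ) ≠ 0 := Nat.cast_ne_zero.2 (by omega)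
  have hFderiv : ∀ x ∈ Ioo (0:ℝ) (ϖ / 2), HasDerivAt F (φ x ^ (m - 1)) x := by
    intro x hx
    have hx' : x ∈ Icc (0:ℝ) (ϖ / 2) := ⟨hx.1.le, hx.2.le⟩
    have hlt1 : φ x < 1 := hφx1 x ⟨hx.1.le, hx.2⟩
    have hbase : 0 < 1 - φ x ^ m := by
      have : φ x ^ m < 1 := pow_lt_one₀ (hφ01 x hx').1 hlt1 (by omega)
      linarith
    have h1 : HasDerivAt (fun y => 1 - φ y ^ m)
        (-((m:ℝ) * φ x ^ (m - 1) * ((1 - φ x ^ m) ^ ((1/2) : ℝ)))) x :=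
      ((hφderiv x hx).pow m).const_sub 1
    have h2 := h1.rpow_const (p := (1/2 : ℝ)) (Or.inl hbase.ne')
    have h3 := h2.const_mul (-(2 / (m:ℝ)))
    refine h3.congr_deriv (Eq.symm ?_)
    have hhalf : (1 - φ x ^ m) ^ ((1/2) : ℝ) * (1 - φ x ^ m) ^ (-(1/2) : ℝ) = 1 := by
      rw [← Real.rpow_add hbase]
      norm_num
    rw [show ((1:ℝ)/2 - 1) = -(1/2) by norm_num]
    have hkey : -(2 / (m:ℝ)) * (-((m:ℝ) * φ x ^ (m - 1) * (1 - φ x ^ m) ^ ((1/2) : ℝ)) * (1/2)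
          * (1 - φ x ^ m) ^ (-(1/2) : ℝ))
        = ((m:ℝ) / (m:ℝ)) * φ x ^ (m - 1)
          * ((1 - φ x ^ m) ^ ((1/2) : ℝ) * (1 - φ x ^ m) ^ (-(1/2) : ℝ)) := by ring
    rw [hkey, hhalf, div_self hm0]
    ring
  have hFcont : ContinuousOn F (Icc 0 (ϖ / 2)) := by
    apply ContinuousOn.mul continuousOn_const
    apply ContinuousOn.rpow_const (continuousOn_const.sub (hφcont.pow m))
    intro x _
    exact Or.inr (by norm_num)
  have hφint : IntervalIntegrable (fun x => φ x ^ (m - 1)) volume 0 (ϖ / 2) := by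
    apply ContinuousOn.intervalIntegrable
    rw [uIcc_of_le hcpos.le]
    exact hφcont.pow _
  have hhalfint : ∫ x in (0:ℝ)..(ϖ / 2), φ x ^ (m - 1) = 2 / m := by
    rw [integral_eq_sub_of_hasDeriv_right_of_le hcpos.le hFcont
      (fun x hx => (hFderiv x hx).hasDerivWithinAt) hφint]
    rw [hF]
    simp only [hφc, hφ0]
    rw [one_pow, sub_self, Real.zero_rpow (by norm_num : ((1:ℝ)/2) ≠ 0)]
    rw [zero_pow (by omega : m ≠ 0), sub_zero, Real.one_rpow]
    ring
  -- symmetry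
  have hϖpos : 0 < ϖ := by linarith
  have hsecond : ∫ x in (ϖ / 2)..ϖ, φ x ^ (m - 1) = ∫ x in (0:ℝ)..(ϖ / 2), φ x ^ (m - 1) := by
    have hcongr : ∫ x in (ϖ / 2)..ϖ, φ x ^ (m - 1)
        = ∫ x in (ϖ / 2)..ϖ, φ (ϖ - x) ^ (m - 1) := by
      apply integral_congr
      intro x hx
      rw [uIcc_of_le (by linarith)] at hx
      show φ x ^ (m - 1) = φ (ϖ - x) ^ (m - 1)
      rw [hφsymm x ⟨by linarith [hx.1], hx.2⟩]
    rw [hcongr, integral_comp_sub_left (fun u => φ u ^ (m - 1)) ϖ,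
      show ϖ - ϖ = (0:ℝ) by ring, show ϖ - ϖ / 2 = ϖ / 2 by ring]
  have hsecint : IntervalIntegrable (fun x => φ x ^ (m - 1)) volume (ϖ / 2) ϖ := by
    rw [intervalIntegrable_iff]
    have h1 : IntervalIntegrable (fun x => φ (ϖ - x) ^ (m - 1)) volume (ϖ / 2) ϖ := by
      have := (hφint.comp_sub_left ϖ)
      have e1 : ϖ - 0 = ϖ := by ring
      have e2 : ϖ - ϖ / 2 = ϖ / 2 := by ring
      rw [e1, e2] at this
      exact this.symm
    rw [intervalIntegrable_iff] at h1
    apply h1.congr_fun _ measurableSet_uIoc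
    intro x hx
    rw [uIoc_of_le (by linarith)] at hx
    show φ (ϖ - x) ^ (m - 1) = φ x ^ (m - 1)
    rw [hφsymm x ⟨by linarith [hx.1], hx.2⟩]
  have hsplit : ∫ x in (0:ℝ)..ϖ, φ x ^ (m - 1)
      = (∫ x in (0:ℝ)..(ϖ / 2), φ x ^ (m - 1)) + ∫ x in (ϖ / 2)..ϖ, φ x ^ (m - 1) :=
    (integral_add_adjacent_intervals hφint hsecint).symm
  rw [hsplit, hsecond, hhalfint]
  ring
end

section
/- Let m ≥ 1 be a natural number, ϖ_m = 2∫_0^1 (1-t^m)^(-1/2) dt, and let φ : ℝ → ℝ satisfy: x = ∫_0^{φ(x)} (1-t^m)^(-1/2) dt and 0 ≤ φ(x) ≤ 1 for all x ∈ [0, ϖ_m/2], and φ(ϖ_m - x) = φ(x) for all x ∈ [0, ϖ_m]. Define I(n) = ∫_0^{ϖ_m} φ(x)^n dx, and define Γ_2(n,k) by Γ_2(0,k) = 1, Γ_2(1,0) = 1, and Γ_2(n+1,k) = (2n+k)·Γ_2(n,k). Then for all natural numbers n ≥ 1, I(mn - 1)·Γ_2(n,1) = Γ_2(n,0)·(4/m).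 -/
open MeasureTheory intervalIntegral Set

lemma cloF_meas (m : ℕ) : Measurable (fun t : ℝ => (1 - t ^ m) ^ (-(1/2) : ℝ)) := by
  fun_prop

lemma cloF_int (m : ℕ) (hm : 1 ≤ m) (k : ℕ) :
    IntervalIntegrable (fun t : ℝ => t ^ k * (1 - t ^ m) ^ (-(1/2) : ℝ)) volume 0 1 := by
  have hg : IntervalIntegrable (fun t : ℝ => (1 - t) ^ (-(1/2) : ℝ)) volume 0 1 := by
    have h0 := (intervalIntegrable_rpow' (a := 0) (b := 1) (r := -(1/2)) (by norm_num)).comp_sub_left 1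
    have h1 : IntervalIntegrable (fun x : ℝ => ((1:ℝ) - x) ^ (-(1/2) : ℝ)) volume (1 - 0) (1 - 1) := h0
    norm_num at h1
    exact h1.symm
  apply hg.mono_fun
  · exact ((measurable_id.pow_const k).mul (cloF_meas m)).aestronglyMeasurable
  · filter_upwards [ae_restrict_mem measurableSet_uIoc] with t ht
    rw [uIoc_of_le (by norm_num : (0:ℝ) ≤ 1)] at ht
    obtain ⟨ht0, ht1⟩ := ht
    rcases eq_or_lt_of_le ht1 with h1 | h1
    · subst h1
      simp [Real.zero_rpow (by norm_num : -(1/2:ℝ) ≠ 0)]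
    · have htm : t ^ m ≤ t := by
        calc t ^ m ≤ t ^ 1 := pow_le_pow_of_le_one ht0.le h1.le hm
        _ = t := pow_one t
      have hpos : 0 < 1 - t := by linarith
      have hle : (1 - t ^ m) ^ (-(1/2) : ℝ) ≤ (1 - t) ^ (-(1/2) : ℝ) :=
        Real.rpow_le_rpow_of_nonpos hpos (by linarith) (by norm_num)
      have h2 : 0 ≤ (1 - t ^ m : ℝ) ^ (-(1/2) : ℝ) := Real.rpow_nonneg (by nlinarith) _
      have h3 : t ^ k ≤ 1 := pow_le_one₀ ht0.le h1.le
      rw [Real.norm_eq_abs, Real.norm_eq_abs, abs_of_nonneg (mul_nonneg (pow_nonneg ht0.le k) h2),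
        abs_of_nonneg (Real.rpow_nonneg hpos.le _)]
      nlinarith [pow_nonneg ht0.le k]

lemma clo_deriv (m : ℕ) (hm : 1 ≤ m) (j : ℕ) {r : ℝ} (hr : r ∈ Set.Ioo (0:ℝ) 1) :
    HasDerivAt (fun r : ℝ => r ^ (j+1) * (1 - r ^ m) ^ ((1/2) : ℝ))
      (((j:ℝ)+1) * (r ^ j * (1 - r ^ m) ^ (-(1/2):ℝ))
        - (((j:ℝ)+1) + (m:ℝ)/2) * (r ^ (j+m) * (1 - r ^ m) ^ (-(1/2):ℝ))) r := by
  obtain ⟨hr0, hr1⟩ := hr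
  have hbase : (0:ℝ) < 1 - r ^ m := by
    have : r ^ m < 1 := pow_lt_one₀ hr0.le hr1 (by omega)
    linarith
  have h1 : HasDerivAt (fun r : ℝ => 1 - r ^ m) (-((m:ℝ) * r ^ (m-1))) r := by
    simpa using ((hasDerivAt_pow m r).const_sub 1)
  have h2 : HasDerivAt (fun r : ℝ => (1 - r ^ m) ^ ((1/2) : ℝ))
      ((-((m:ℝ) * r ^ (m-1))) * (1/2) * (1 - r ^ m) ^ ((1/2) - 1 : ℝ)) r :=
    h1.rpow_const (Or.inl hbase.ne')
  have h3 := (hasDerivAt_pow (j+1) r).mul h2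
  refine h3.congr_deriv ?_
  have e1 : ((1:ℝ)/2) - 1 = -(1/2) := by norm_num
  have e2 : (1 - r ^ m) ^ ((1/2):ℝ) = (1 - r ^ m) * (1 - r ^ m) ^ (-(1/2):ℝ) := by
    nth_rewrite 1 [show ((1/2):ℝ) = 1 + (-(1/2)) by norm_num]
    rw [Real.rpow_add hbase, Real.rpow_one]
  rw [e1, e2]
  obtain ⟨m', rfl⟩ : ∃ m', m = m' + 1 := ⟨m-1, by omega⟩
  simp only [Nat.add_sub_cancel, Nat.cast_add, Nat.cast_one]
  ring

lemma clo_base (m : ℕ) (hm : 1 ≤ m) :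
    ∫ r in (0:ℝ)..1, ((m:ℝ)/2) * (r ^ (m-1) * (1 - r ^ m) ^ (-(1/2):ℝ)) = 1 := by
  have hcont : ContinuousOn (fun r : ℝ => (1 - r ^ m) ^ ((1/2):ℝ)) (Set.Icc 0 1) := by
    apply ContinuousOn.rpow_const
    · exact (continuous_const.sub (continuous_pow m)).continuousOn
    · intro x _; right; norm_num
  have hderiv : ∀ x ∈ Set.Ioo (0:ℝ) 1,
      HasDerivWithinAt (fun r : ℝ => (1 - r ^ m) ^ ((1/2):ℝ))
        (-(((m:ℝ)/2) * (x ^ (m-1) * (1 - x ^ m) ^ (-(1/2):ℝ)))) (Set.Ioi x) x := by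
    intro x hx
    obtain ⟨hx0, hx1⟩ := hx
    have hbase : (0:ℝ) < 1 - x ^ m := by
      have : x ^ m < 1 := pow_lt_one₀ hx0.le hx1 (by omega)
      linarith
    have h1 : HasDerivAt (fun r : ℝ => 1 - r ^ m) (-((m:ℝ) * x ^ (m-1))) x := by
      simpa using ((hasDerivAt_pow m x).const_sub 1)
    have h2 := h1.rpow_const (p := (1/2:ℝ)) (Or.inl hbase.ne')
    have e1 : ((1:ℝ)/2) - 1 = -(1/2) := by norm_num
    rw [e1] at h2
    refine (h2.congr_deriv ?_).hasDerivWithinAt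
    ring
  have hint : IntervalIntegrable
      (fun x : ℝ => -(((m:ℝ)/2) * (x ^ (m-1) * (1 - x ^ m) ^ (-(1/2):ℝ)))) volume 0 1 :=
    ((cloF_int m hm (m-1)).const_mul _).neg
  have h := intervalIntegral.integral_eq_sub_of_hasDeriv_right_of_le (by norm_num) hcont hderiv hint
  rw [intervalIntegral.integral_neg] at h
  have h10 : ((1:ℝ) - 1 ^ m) ^ ((1/2):ℝ) = 0 := by
    simp [Real.zero_rpow (by norm_num : (1/2:ℝ) ≠ 0)]
  have h00 : ((1:ℝ) - 0 ^ m) ^ ((1/2):ℝ) = 1 := by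
    rw [zero_pow (by omega), sub_zero, Real.one_rpow]
  rw [h10, h00] at h
  linarith

lemma clo_step (m : ℕ) (hm : 1 ≤ m) (j : ℕ) :
    ((j:ℝ)+1) * ∫ r in (0:ℝ)..1, r ^ j * (1 - r ^ m) ^ (-(1/2):ℝ)
      = (((j:ℝ)+1) + (m:ℝ)/2) * ∫ r in (0:ℝ)..1, r ^ (j+m) * (1 - r ^ m) ^ (-(1/2):ℝ) := by
  have hcont : ContinuousOn (fun r : ℝ => r ^ (j+1) * (1 - r ^ m) ^ ((1/2):ℝ)) (Set.Icc 0 1) := by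
    apply ContinuousOn.mul (continuous_pow _).continuousOn
    apply ContinuousOn.rpow_const
    · exact (continuous_const.sub (continuous_pow m)).continuousOn
    · intro x _; right; norm_num
  have hint : IntervalIntegrable (fun r : ℝ =>
      ((j:ℝ)+1) * (r ^ j * (1 - r ^ m) ^ (-(1/2):ℝ))
        - (((j:ℝ)+1) + (m:ℝ)/2) * (r ^ (j+m) * (1 - r ^ m) ^ (-(1/2):ℝ))) volume 0 1 :=
    ((cloF_int m hm j).const_mul _).sub ((cloF_int m hm (j+m)).const_mul _)
  have h := intervalIntegral.integral_eq_sub_of_hasDeriv_right_of_le (by norm_num) hcont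
      (fun x hx => (clo_deriv m hm j hx).hasDerivWithinAt) hint
  rw [intervalIntegral.integral_sub ((cloF_int m hm j).const_mul _)
      ((cloF_int m hm (j+m)).const_mul _),
    intervalIntegral.integral_const_mul, intervalIntegral.integral_const_mul] at h
  have h10 : ((1:ℝ)) ^ (j+1) * ((1:ℝ) - 1 ^ m) ^ ((1/2):ℝ) = 0 := by
    simp [Real.zero_rpow (by norm_num : (1/2:ℝ) ≠ 0)]
  have h00 : ((0:ℝ)) ^ (j+1) * ((1:ℝ) - 0 ^ m) ^ ((1/2):ℝ) = 0 := by
    simp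
  rw [h10, h00] at h
  linarith

/-- The congruence Gamma function `Γ_2(n, k)`, defined recursively by
`Γ_2(0, k) = 1`, `Γ_2(1, 0) = 1`, and `Γ_2(n+1, k) = (2n + k) Γ_2(n, k)`. -/
noncomputable def congGamma2 : ℕ → ℕ → ℝ
  | 0, _ => 1
  | n + 1, k => if n = 0 ∧ k = 0 then 1 else ((2 * n + k : ℕ) : ℝ) * congGamma2 n k

/-- **Explicit formula for `I_m(mn - 1)`.**
Let `m ≥ 1`, `ϖ = 2 ∫_0^1 (1 - t^m)^(-1/2) dt`, `φ` the `m`-clover function, and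
`I(n) = ∫_0^ϖ φ(x)^n dx`.  Then for all `n ≥ 1`,
`I(mn - 1) Γ_2(n, 1) = Γ_2(n, 0) (4/m)`. -/
theorem clover_integral_formula_mn_sub_one (m : ℕ) (hm : 1 ≤ m)
    (ϖ : ℝ) (hϖ : ϖ = 2 * ∫ t in (0:ℝ)..1, (1 - t ^ m) ^ (-(1/2) : ℝ))
    (φ : ℝ → ℝ)
    (hφ : ∀ x ∈ Set.Icc 0 (ϖ / 2),
      x = ∫ t in (0:ℝ)..(φ x), (1 - t ^ m) ^ (-(1/2) : ℝ))
    (hφ01 : ∀ x ∈ Set.Icc 0 (ϖ / 2), φ x ∈ Set.Icc (0:ℝ) 1)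
    (hφsymm : ∀ x ∈ Set.Icc 0 ϖ, φ (ϖ - x) = φ x)
    (I : ℕ → ℝ) (hI : ∀ n : ℕ, I n = ∫ x in (0:ℝ)..ϖ, φ x ^ n) :
    ∀ n : ℕ, 1 ≤ n →
      I (m * n - 1) * congGamma2 n 1 = congGamma2 n 0 * (4 / m) := by
  set F : ℝ → ℝ := fun t => (1 - t ^ m) ^ (-(1/2) : ℝ) with hF
  set l : ℝ → ℝ := fun r => ∫ t in (0:ℝ)..r, F t with hldef
  have hlφ : ∀ x ∈ Set.Icc 0 (ϖ / 2), l (φ x) = x := fun x hx => (hφ x hx).symm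
  -- basic facts on F
  have hFint : IntervalIntegrable F volume 0 1 := by
    have := cloF_int m hm 0
    simpa only [pow_zero, one_mul] using this
  have hFnonneg : ∀ t ∈ Icc (0:ℝ) 1, 0 ≤ F t := by
    intro t ht
    exact Real.rpow_nonneg (by nlinarith [pow_le_one₀ ht.1 ht.2 (n := m)]) _
  have hFone : ∀ t ∈ Ico (0:ℝ) 1, 1 ≤ F t := by
    intro t ht
    have h1 : t ^ m < 1 := pow_lt_one₀ ht.1 ht.2 (by omega)
    have h2 : 0 ≤ t ^ m := pow_nonneg ht.1 m
    have := Real.rpow_le_rpow_of_nonpos (x := 1 - t ^ m) (y := 1)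
      (by linarith) (by linarith) (z := -(1/2)) (by norm_num)
    simpa only [Real.one_rpow] using this
  -- interval integral pieces of l
  have hldiff : ∀ a b : ℝ, 0 ≤ a → a ≤ b → b ≤ 1 → l b - l a = ∫ t in a..b, F t := by
    intro a b ha hab hb1
    have h1 : IntervalIntegrable F volume 0 a :=
      hFint.mono_set (by rw [uIcc_of_le ha, uIcc_of_le (by norm_num)]
                         exact Icc_subset_Icc le_rfl (le_trans hab hb1))
    have h2 : IntervalIntegrable F volume a b :=
      hFint.mono_set (by rw [uIcc_of_le hab, uIcc_of_le (by norm_num)]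
                         exact Icc_subset_Icc ha hb1)
    have := intervalIntegral.integral_add_adjacent_intervals h1 h2
    simp only [hldef]
    linarith [this]
  have hlmono : ∀ a b : ℝ, 0 ≤ a → a ≤ b → b ≤ 1 → l a ≤ l b := by
    intro a b ha hab hb1
    have := hldiff a b ha hab hb1
    have hnn : 0 ≤ ∫ t in a..b, F t :=
      intervalIntegral.integral_nonneg hab
        (fun u hu => hFnonneg u ⟨le_trans ha hu.1, le_trans hu.2 hb1⟩)
    linarith
  have hlstrict : ∀ a b : ℝ, 0 ≤ a → a < b → b ≤ 1 → l a < l b := by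
    intro a b ha hab hb1
    set c : ℝ := (a + b) / 2 with hc
    have hac : a < c := by rw [hc]; linarith
    have hcb : c < b := by rw [hc]; linarith
    have h1 : l c - l a = ∫ t in a..c, F t := hldiff a c ha hac.le (by linarith)
    have hge : ∫ t in a..c, F t ≥ ∫ t in a..c, (1:ℝ) := by
      apply intervalIntegral.integral_mono_on hac.le intervalIntegrable_const
      · exact hFint.mono_set (by rw [uIcc_of_le hac.le, uIcc_of_le (by norm_num)]
                                 exact Icc_subset_Icc ha (by linarith))
      · intro u hu
        exact hFone u ⟨le_trans ha hu.1, lt_of_le_of_lt hu.2 (lt_of_lt_of_le hcb hb1)⟩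
    rw [intervalIntegral.integral_const] at hge
    have h2 : l c ≤ l b := hlmono c b (by linarith) hcb.le hb1
    simp only [smul_eq_mul, mul_one] at hge
    have : l c - l a ≥ c - a := by linarith
    linarith
  have hl0 : l 0 = 0 := intervalIntegral.integral_same
  have hl1 : l 1 = ϖ / 2 := by
    have h1 : l 1 = ∫ t in (0:ℝ)..1, F t := rfl
    rw [h1, hϖ]; ring
  have hϖpos : 0 < ϖ := by
    have := hlstrict 0 1 le_rfl one_pos le_rfl
    rw [hl0, hl1] at this; linarith
  have hlmaps : ∀ r ∈ Icc (0:ℝ) 1, l r ∈ Icc 0 (ϖ/2) := by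
    intro r hr
    constructor
    · rw [← hl0]; exact hlmono 0 r le_rfl hr.1 hr.2
    · rw [← hl1]; exact hlmono r 1 hr.1 hr.2 le_rfl
  have hphil : ∀ r ∈ Icc (0:ℝ) 1, φ (l r) = r := by
    intro r hr
    have h1 := hlφ (l r) (hlmaps r hr)
    have h2 := hφ01 (l r) (hlmaps r hr)
    by_contra hne
    rcases lt_or_gt_of_ne hne with h | h
    · have h3 := hlstrict _ _ h2.1 h hr.2
      rw [h1] at h3; exact lt_irrefl _ h3
    · have h3 := hlstrict _ _ hr.1 h h2.2
      rw [h1] at h3; exact lt_irrefl _ h3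
  have hφmono : StrictMonoOn φ (Icc 0 (ϖ/2)) := by
    intro x hx y hy hxy
    by_contra hle
    push_neg at hle
    have h := hlmono _ _ (hφ01 y hy).1 hle (hφ01 x hx).2
    rw [hlφ x hx, hlφ y hy] at h
    linarith
  have hright : ∀ a ∈ Ico (0:ℝ) (ϖ/2), ContinuousWithinAt φ (Ici a) a := by
    intro a ha
    have haI : a ∈ Icc (0:ℝ) (ϖ/2) := ⟨ha.1, ha.2.le⟩
    apply hφmono.continuousWithinAt_right_of_exists_between (Icc_mem_nhdsGE_of_mem ha)
    intro b hb
    have hφa0 : 0 ≤ φ a := (hφ01 a haI).1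
    have hφa1 : φ a < 1 := by
      rcases lt_or_eq_of_le (hφ01 a haI).2 with h | h
      · exact h
      · exfalso
        have h2 := hlφ a haI
        rw [h, hl1] at h2
        linarith [ha.2]
    set r := min b ((φ a + 1)/2) with hr
    have hrgt : φ a < r := lt_min hb (by linarith)
    have hr1 : r ≤ 1 := le_trans (min_le_right _ _) (by linarith)
    have hr0 : 0 ≤ r := le_of_lt (lt_of_le_of_lt hφa0 hrgt)
    refine ⟨l r, hlmaps r ⟨hr0, hr1⟩, ?_⟩
    rw [hphil r ⟨hr0, hr1⟩]
    exact ⟨hrgt, min_le_left _ _⟩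
  have hleft : ∀ a ∈ Ioc (0:ℝ) (ϖ/2), ContinuousWithinAt φ (Iic a) a := by
    intro a ha
    have haI : a ∈ Icc (0:ℝ) (ϖ/2) := ⟨ha.1.le, ha.2⟩
    apply hφmono.continuousWithinAt_left_of_exists_between (Icc_mem_nhdsLE_of_mem ha)
    intro b hb
    have hφa0 : 0 < φ a := by
      rcases lt_or_eq_of_le (hφ01 a haI).1 with h | h
      · exact h
      · exfalso
        have h2 := hlφ a haI
        rw [← h, hl0] at h2
        linarith [ha.1]
    set r := max b (φ a / 2) with hr
    have hrlt : r < φ a := max_lt hb (by linarith)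
    have hr0 : 0 ≤ r := le_trans (by linarith) (le_max_right _ _)
    have hr1 : r ≤ 1 := hrlt.le.trans (hφ01 a haI).2
    exact ⟨l r, hlmaps r ⟨hr0, hr1⟩,
      by rw [hphil r ⟨hr0, hr1⟩]; exact ⟨le_max_left _ _, hrlt⟩⟩
  have hφcont : ContinuousOn φ (Icc 0 (ϖ/2)) := by
    intro a ha
    rcases eq_or_lt_of_le ha.1 with h0 | h0
    · subst h0
      exact (hright 0 ⟨le_rfl, by positivity⟩).mono Icc_subset_Ici_self
    rcases eq_or_lt_of_le ha.2 with h1 | h1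
    · subst h1
      exact (hleft _ ⟨h0, le_rfl⟩).mono Icc_subset_Iic_self
    · exact (continuousAt_iff_continuous_left_right.2
        ⟨hleft a ⟨h0, ha.2⟩, hright a ⟨ha.1, h1⟩⟩).continuousWithinAt
  have hsym2 : ∀ x ∈ Icc (ϖ/2) ϖ, φ x = φ (ϖ - x) := by
    intro x hx
    have h1 : ϖ - x ∈ Icc (0:ℝ) ϖ := ⟨by linarith [hx.2], by linarith [hx.1, hϖpos]⟩
    have h2 := hφsymm (ϖ - x) h1
    simpa using h2
  have hIhalf : ∀ k : ℕ, I k = 2 * ∫ x in (0:ℝ)..(ϖ/2), φ x ^ k := by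
    intro k
    have hc1 : ContinuousOn (fun x => φ x ^ k) (Icc 0 (ϖ/2)) := hφcont.pow k
    have hint1 : IntervalIntegrable (fun x => φ x ^ k) volume 0 (ϖ/2) :=
      ContinuousOn.intervalIntegrable (by rw [uIcc_of_le (by linarith)]; exact hc1)
    have hc2 : ContinuousOn (fun x => φ x ^ k) (Icc (ϖ/2) ϖ) := by
      have hcomp : ContinuousOn (fun x => φ (ϖ - x) ^ k) (Icc (ϖ/2) ϖ) := by
        apply ContinuousOn.pow
        apply hφcont.comp ((continuous_const.sub continuous_id).continuousOn)
        intro x hx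
        have hmem : ϖ - x ∈ Icc 0 (ϖ/2) := ⟨by linarith [hx.2], by linarith [hx.1]⟩
        simpa using hmem
      exact hcomp.congr (fun x hx => by show φ x ^ k = φ (ϖ - x) ^ k; rw [hsym2 x hx])
    have hint2 : IntervalIntegrable (fun x => φ x ^ k) volume (ϖ/2) ϖ :=
      ContinuousOn.intervalIntegrable (by rw [uIcc_of_le (by linarith)]; exact hc2)
    have hadd := intervalIntegral.integral_add_adjacent_intervals hint1 hint2
    have hflip : ∫ x in (ϖ/2)..ϖ, φ x ^ k = ∫ x in (0:ℝ)..(ϖ/2), φ x ^ k := by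
      have e1 : ∫ x in (ϖ/2)..ϖ, φ x ^ k = ∫ x in (ϖ/2)..ϖ, φ (ϖ - x) ^ k :=
        intervalIntegral.integral_congr (by
          rw [uIcc_of_le (by linarith)]
          exact fun x hx => by show φ x ^ k = φ (ϖ - x) ^ k; rw [hsym2 x hx])
      rw [e1, intervalIntegral.integral_comp_sub_left (fun x => φ x ^ k) ϖ, sub_self,
        show ϖ - ϖ/2 = ϖ/2 by ring]
    rw [hI k, ← hadd, hflip]; ring
  have hsub : ∀ k : ℕ, (∫ x in (0:ℝ)..(ϖ/2), φ x ^ k) = ∫ r in (0:ℝ)..1, r ^ k * F r := by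
    intro k
    have hFItOn : IntegrableOn F (Icc 0 1) volume := by
      rw [integrableOn_Icc_iff_integrableOn_Ioc]
      exact (intervalIntegrable_iff_integrableOn_Ioc_of_le (by norm_num)).1 hFint
    have hlcont : ContinuousOn l (uIcc (0:ℝ) 1) :=
      intervalIntegral.continuousOn_primitive_interval (by
        rw [uIcc_of_le (by norm_num)]; exact hFItOn)
    have hldf : ∀ x ∈ Ioo (0:ℝ) 1, HasDerivWithinAt l (F x) (Ioi x) x := by
      intro x hx
      have hbase : (0:ℝ) < 1 - x ^ m := by
        have : x ^ m < 1 := pow_lt_one₀ hx.1.le hx.2 (by omega)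
        linarith
      have hcF : ContinuousAt F x := by
        have hc : ContinuousAt (fun t : ℝ => 1 - t ^ m) x := by fun_prop
        exact hc.rpow_const (Or.inl hbase.ne')
      have hintx : IntervalIntegrable F volume 0 x :=
        hFint.mono_set (by
          rw [uIcc_of_le hx.1.le, uIcc_of_le (by norm_num : (0:ℝ) ≤ 1)]
          exact Icc_subset_Icc le_rfl hx.2.le)
      exact (intervalIntegral.integral_hasDerivAt_right hintx
        ((cloF_meas m).stronglyMeasurable.stronglyMeasurableAtFilter) hcF).hasDerivWithinAt
    have hminmax0 : min (0:ℝ) 1 = 0 := by norm_num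
    have hminmax1 : max (0:ℝ) 1 = 1 := by norm_num
    have h := intervalIntegral.integral_comp_smul_deriv''' (a := (0:ℝ)) (b := 1)
      (f := l) (f' := F) (g := fun u => φ u ^ k) hlcont
      (fun x hx => hldf x (by rw [hminmax0, hminmax1] at hx; exact hx))
      (by
        rw [hminmax0, hminmax1]
        apply (hφcont.pow k).mono
        rintro y ⟨x, hx, rfl⟩
        exact hlmaps x ⟨hx.1.le, hx.2.le⟩)
      (by
        apply ((hφcont.pow k).integrableOn_Icc).mono_set
        rintro y ⟨x, hx, rfl⟩
        rw [uIcc_of_le (by norm_num : (0:ℝ) ≤ 1)] at hx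
        exact hlmaps x hx)
      (by
        have base : IntegrableOn (fun x : ℝ => x ^ k * F x) (Icc 0 1) volume := by
          rw [integrableOn_Icc_iff_integrableOn_Ioc]
          exact (intervalIntegrable_iff_integrableOn_Ioc_of_le (by norm_num)).1 (cloF_int m hm k)
        rw [uIcc_of_le (by norm_num : (0:ℝ) ≤ 1)]
        exact base.congr_fun
          (fun x hx => by
            show x ^ k * F x = F x • (φ (l x)) ^ k
            rw [hphil x hx, smul_eq_mul]; ring)
          measurableSet_Icc)
    rw [hl0, hl1] at h
    rw [← h]
    apply intervalIntegral.integral_congr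
    rw [uIcc_of_le (by norm_num : (0:ℝ) ≤ 1)]
    intro x hx
    show F x • (φ (l x)) ^ k = x ^ k * F x
    rw [hphil x hx, smul_eq_mul]; ring
  have hm0 : (0:ℝ) < (m:ℝ) := by exact_mod_cast hm
  have hIJ : ∀ k : ℕ, I k = 2 * ∫ r in (0:ℝ)..1, r ^ k * F r := by
    intro k; rw [hIhalf k, hsub k]
  intro n hn
  induction n, hn using Nat.le_induction with
  | base =>
    have hbase := clo_base m hm
    rw [intervalIntegral.integral_const_mul] at hbase
    have hJ : (∫ r in (0:ℝ)..1, r ^ (m-1) * F r) = 2 / (m:ℝ) := by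
      have hb2 : ((m:ℝ)/2) * ∫ r in (0:ℝ)..1, r ^ (m-1) * F r = 1 := hbase
      field_simp at hb2 ⊢
      linarith
    have hmul : m * 1 - 1 = m - 1 := by omega
    rw [hmul, hIJ, hJ]
    have h1 : congGamma2 1 1 = 1 := by simp [congGamma2]
    have h0 : congGamma2 1 0 = 1 := by simp [congGamma2]
    rw [h1, h0]
    field_simp
    norm_num
  | succ n hn ih =>
    have h1n : 1 ≤ m * n := by
      have := Nat.mul_le_mul hm hn; simpa using this
    have e : (m * n - 1) + m = m * (n+1) - 1 := by
      have h2 : m * (n+1) = m * n + m := by ring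
      omega
    have ecast : ((m * n - 1 : ℕ) : ℝ) + 1 = (m:ℝ) * n := by
      rw [Nat.cast_sub h1n]
      push_cast
      ring
    have hstep : ((m:ℝ) * n) * (∫ r in (0:ℝ)..1, r ^ (m * n - 1) * F r)
        = ((m:ℝ) * n + (m:ℝ)/2) * ∫ r in (0:ℝ)..1, r ^ (m * (n+1) - 1) * F r := by
      have h := clo_step m hm (m * n - 1)
      rw [e, ecast] at h
      exact h
    rw [hIJ] at ih ⊢
    set A := ∫ r in (0:ℝ)..1, r ^ (m * n - 1) * F r with hA
    set B := ∫ r in (0:ℝ)..1, r ^ (m * (n+1) - 1) * F r with hB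
    have hΓ1 : congGamma2 (n+1) 1 = ((2*n+1 : ℕ) : ℝ) * congGamma2 n 1 := by
      simp [congGamma2]
    have hΓ0 : congGamma2 (n+1) 0 = ((2*n+0 : ℕ) : ℝ) * congGamma2 n 0 := by
      have hne : ¬ (n = 0 ∧ (0:ℕ) = 0) := by omega
      simp only [congGamma2]
      rw [if_neg (by simpa using hne)]
    rw [hΓ1, hΓ0]
    push_cast
    have hd : (m:ℝ) * n + (m:ℝ)/2 ≠ 0 := by positivity
    apply mul_left_cancel₀ hd
    linear_combination (-(2*((2:ℝ)*n+1)*congGamma2 n 1)) * hstep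
      + ((m:ℝ)*n*(2*(n:ℝ)+1)) * ih
end
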